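/- arXiv:2403.14570 — 10 statements merged into one kernel-verified Lean document; each statement's English description precedes it below -/
import Mathlib

section
/- Let f : ℝ → ℝ be a probability density function (nonnegative, integrable, with total integral 1) that is unimodal with mode M, i.e. f is nondecreasing on (−∞, M] and nonincreasing on [M, ∞). Let X and Y be independent random variables each with density f. Then the function g(t) = ∫ f(x) f(x − t) dx is a density of X − Y, g is an even function, and g is nonincreasing on [0, ∞) (equivalently, nondecreasing on (−∞, 0]), so X − Y has a symmetric unimodal distribution with mode 0. -/
open MeasureTheory ProbabilityTheory Set
open scoped ENNReal

section HLaux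

variable {f : ℝ → ℝ} {M : ℝ}

lemma HL_levelOrdConn (hmono : MonotoneOn f (Iic M)) (hanti : AntitoneOn f (Ici M)) (u : ℝ) :
    OrdConnected {x | u < f x} := by
  constructor
  rintro x hx y hy z hz
  simp only [mem_setOf_eq] at hx hy ⊢
  rcases le_total z M with h | h
  · exact lt_of_lt_of_le hx (hmono (le_trans hz.1 h) h hz.1)
  · exact lt_of_lt_of_le hy (hanti h (le_trans h hz.2) hz.2)

lemma HL_measurable (hmono : MonotoneOn f (Iic M)) (hanti : AntitoneOn f (Ici M)) :
    Measurable f :=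
  measurable_of_Ioi fun u => (HL_levelOrdConn hmono hanti u).measurableSet

lemma HL_bound (hmono : MonotoneOn f (Iic M)) (hanti : AntitoneOn f (Ici M)) (x : ℝ) :
    f x ≤ f M := by
  rcases le_total x M with h | h
  · exact hmono h (le_refl M) h
  · exact hanti (le_refl M) h h

/-- Key overlap lemma: for nested order-connected sets, the measure of the overlap of `A`
with the translate of `B` by `t` is antitone in `t ≥ 0`. -/
lemma HL_overlap {A B : Set ℝ} (hA : A.OrdConnected) (hB : B.OrdConnected)
    (hn : A ⊆ B ∨ B ⊆ A) {s t : ℝ} (hs : 0 ≤ s) (hst : s ≤ t) :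
    volume {x | x ∈ A ∧ x - t ∈ B} ≤ volume {x | x ∈ A ∧ x - s ∈ B} := by
  rcases hn with hAB | hBA
  · apply measure_mono
    rintro x ⟨hxA, hxB⟩
    refine ⟨hxA, hB.out hxB (hAB hxA) ⟨by linarith, by linarith⟩⟩
  · have key : {x | x ∈ A ∧ x - t ∈ B} ⊆
        (fun x => x - (t - s)) ⁻¹' {x | x ∈ A ∧ x - s ∈ B} := by
      rintro x ⟨hxA, hxB⟩
      have hz1 : x - t ≤ x - (t - s) := by linarith
      have hz2 : x - (t - s) ≤ x := by linarith
      have h : x - (t - s) - s = x - t := by ring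
      refine ⟨hA.out (hBA hxB) hxA ⟨hz1, hz2⟩, ?_⟩
      show x - (t - s) - s ∈ B
      rw [h]
      exact hxB
    have hmeas : NullMeasurableSet {x | x ∈ A ∧ x - s ∈ B} (volume : Measure ℝ) := by
      have : {x : ℝ | x ∈ A ∧ x - s ∈ B} = A ∩ (fun x => x - s) ⁻¹' B := rfl
      rw [this]
      exact (hA.measurableSet.inter
        ((hB.measurableSet.preimage (measurable_id.sub_const s)))).nullMeasurableSet
    calc volume {x | x ∈ A ∧ x - t ∈ B}
        ≤ volume ((fun x => x - (t - s)) ⁻¹' {x | x ∈ A ∧ x - s ∈ B}) := measure_mono key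
      _ = volume {x | x ∈ A ∧ x - s ∈ B} :=
          (measurePreserving_sub_right volume (t - s)).measure_preimage hmeas

lemma HL_slice (hmono : MonotoneOn f (Iic M)) (hanti : AntitoneOn f (Ici M)) (u v : ℝ)
    {s t : ℝ} (hs : 0 ≤ s) (hst : s ≤ t) :
    volume {x | u < f x ∧ v < f (x - t)} ≤ volume {x | u < f x ∧ v < f (x - s)} := by
  have hA := HL_levelOrdConn hmono hanti u
  have hB := HL_levelOrdConn hmono hanti v
  have hn : {x | u < f x} ⊆ {x | v < f x} ∨ {x | v < f x} ⊆ {x | u < f x} := by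
    rcases le_total u v with h | h
    · exact Or.inr fun x hx => lt_of_le_of_lt h hx
    · exact Or.inl fun x hx => lt_of_le_of_lt h hx
  exact HL_overlap hA hB hn hs hst

end HLaux

/-- Let `f` be a probability density on `ℝ` (nonnegative, integrable, total integral 1)
that is unimodal with mode `M` (nondecreasing on `(−∞, M]`, nonincreasing on `[M, ∞)`),
and let `X, Y` be independent random variables each with density `f`. Then
`g(t) = ∫ f(x) f(x − t) dx` is a density of `X − Y`, `g` is even, and `g` is
nonincreasing on `[0, ∞)` (equivalently, nondecreasing on `(−∞, 0]`); that is, `X − Y`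
has a symmetric unimodal distribution with mode `0` (Hodges–Lehmann 1954). -/
theorem stmt0 {Ω : Type*} [MeasureSpace Ω] [IsProbabilityMeasure (ℙ : Measure Ω)]
    (f : ℝ → ℝ) (M : ℝ)
    (hf0 : ∀ x, 0 ≤ f x) (hfint : Integrable f)
    (hf1 : ∫ x, f x = 1)
    (hmono : MonotoneOn f (Iic M)) (hanti : AntitoneOn f (Ici M))
    (X Y : Ω → ℝ) (hX : Measurable X) (hY : Measurable Y)
    (hindep : IndepFun X Y (ℙ : Measure Ω))
    (hXd : Measure.map X (ℙ : Measure Ω)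
        = volume.withDensity (fun x => ENNReal.ofReal (f x)))
    (hYd : Measure.map Y (ℙ : Measure Ω)
        = volume.withDensity (fun x => ENNReal.ofReal (f x)))
    (g : ℝ → ℝ) (hg : ∀ t, g t = ∫ x, f x * f (x - t)) :
    Measure.map (fun ω : Ω => X ω - Y ω) (ℙ : Measure Ω)
        = volume.withDensity (fun t => ENNReal.ofReal (g t))
    ∧ (∀ t, g (-t) = g t)
    ∧ AntitoneOn g (Ici 0)
    ∧ MonotoneOn g (Iic 0) := by
  have hfm : Measurable f := HL_measurable hmono hanti
  set F : ℝ → ℝ≥0∞ := fun x => ENNReal.ofReal (f x) with hF_def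
  have hFm : Measurable F := ENNReal.measurable_ofReal.comp hfm
  -- integrability of the correlation integrand
  have hintt : ∀ t : ℝ, Integrable (fun x => f x * f (x - t)) := by
    intro t
    have hmeas : AEStronglyMeasurable (fun x => f x * f (x - t)) volume :=
      (hfm.mul (hfm.comp (measurable_id.sub_const t))).aestronglyMeasurable
    refine Integrable.mono (hfint.const_mul (f M)) hmeas (ae_of_all _ fun x => ?_)
    rw [Real.norm_eq_abs, Real.norm_eq_abs, abs_of_nonneg (mul_nonneg (hf0 x) (hf0 _)),
      abs_of_nonneg (mul_nonneg (hf0 M) (hf0 x))]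
    calc f x * f (x - t) ≤ f x * f M :=
          mul_le_mul_of_nonneg_left (HL_bound hmono hanti _) (hf0 x)
      _ = f M * f x := mul_comm _ _
  have hgt0 : ∀ t, 0 ≤ g t := by
    intro t
    rw [hg t]
    exact integral_nonneg fun x => mul_nonneg (hf0 x) (hf0 _)
  -- the correlation as a lintegral
  have hG : ∀ t : ℝ, ∫⁻ x, F x * F (x - t) = ENNReal.ofReal (g t) := by
    intro t
    rw [hg t, ofReal_integral_eq_lintegral_ofReal (hintt t)
      (ae_of_all _ fun x => mul_nonneg (hf0 x) (hf0 _))]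
    refine lintegral_congr fun x => ?_
    rw [ENNReal.ofReal_mul (hf0 x)]
  -- evenness
  have heven : ∀ t, g (-t) = g t := by
    intro t
    rw [hg, hg]
    have h1 : ∫ x, f x * f (x - -t) = ∫ x, f x * f (x + t) := by
      simp only [sub_neg_eq_add]
    have h2 : ∫ x, (fun x => f x * f (x + t)) (x - t) = ∫ x, f x * f (x + t) :=
      integral_sub_right_eq_self (fun x => f x * f (x + t)) t
    rw [h1, ← h2]
    refine integral_congr_ae (ae_of_all _ fun x => ?_)
    have h3 : x - t + t = x := by ring
    simp only [h3]
    ring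
  -- monotonicity of the correlation
  have key : ∀ s t : ℝ, 0 ≤ s → s ≤ t → (∫⁻ x, F x * F (x - t)) ≤ ∫⁻ x, F x * F (x - s) := by
    intro s t hs hst
    -- layer-cake representation
    have hrep : ∀ r : ℝ, (∫⁻ x, F x * F (x - r))
        = ∫⁻ p : ℝ × ℝ, volume {x : ℝ | (0 < p.1 ∧ p.1 < f x) ∧ (0 < p.2 ∧ p.2 < f (x - r))}
            ∂((volume : Measure ℝ).prod (volume : Measure ℝ)) := by
      intro r
      have hW : MeasurableSet {q : ℝ × ℝ × ℝ |
          (0 < q.2.1 ∧ q.2.1 < f q.1) ∧ (0 < q.2.2 ∧ q.2.2 < f (q.1 - r))} := by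
        apply MeasurableSet.inter
        · exact (measurableSet_lt measurable_const measurable_snd.fst).inter
            (measurableSet_lt measurable_snd.fst (hfm.comp measurable_fst))
        · exact (measurableSet_lt measurable_const measurable_snd.snd).inter
            (measurableSet_lt measurable_snd.snd
              (hfm.comp (measurable_fst.sub_const r)))
      set W := {q : ℝ × ℝ × ℝ |
          (0 < q.2.1 ∧ q.2.1 < f q.1) ∧ (0 < q.2.2 ∧ q.2.2 < f (q.1 - r))} with hW_def
      calc (∫⁻ x, F x * F (x - r))
          = ∫⁻ x, ∫⁻ p : ℝ × ℝ, W.indicator 1 (x, p)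
              ∂((volume : Measure ℝ).prod (volume : Measure ℝ)) := by
            refine lintegral_congr fun x => ?_
            have hsec : MeasurableSet {p : ℝ × ℝ | (x, p) ∈ W} :=
              hW.preimage measurable_prodMk_left
            have heq : (fun p : ℝ × ℝ => W.indicator (1 : ℝ × ℝ × ℝ → ℝ≥0∞) (x, p))
                = {p : ℝ × ℝ | (x, p) ∈ W}.indicator 1 := by
              funext p
              by_cases h : (x, p) ∈ W <;> simp [indicator_apply, h]
            rw [heq, lintegral_indicator_one hsec]
            have hxsec : {p : ℝ × ℝ | (x, p) ∈ W} = Ioo 0 (f x) ×ˢ Ioo 0 (f (x - r)) := by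
              ext p
              simp only [hW_def, mem_setOf_eq, mem_prod, mem_Ioo]
            rw [hxsec, Measure.prod_prod, Real.volume_Ioo, Real.volume_Ioo, sub_zero, sub_zero]
        _ = ∫⁻ p : ℝ × ℝ, (∫⁻ x, W.indicator 1 (x, p))
              ∂((volume : Measure ℝ).prod (volume : Measure ℝ)) := by
            apply lintegral_lintegral_swap
            exact (measurable_one.indicator hW).aemeasurable
        _ = ∫⁻ p : ℝ × ℝ, volume {x : ℝ | (0 < p.1 ∧ p.1 < f x) ∧ (0 < p.2 ∧ p.2 < f (x - r))}
              ∂((volume : Measure ℝ).prod (volume : Measure ℝ)) := by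
            refine lintegral_congr fun p => ?_
            have hsec : MeasurableSet {x : ℝ | (x, p) ∈ W} :=
              hW.preimage (measurable_id.prodMk measurable_const)
            have heq : (fun x : ℝ => W.indicator (1 : ℝ × ℝ × ℝ → ℝ≥0∞) (x, p))
                = {x : ℝ | (x, p) ∈ W}.indicator 1 := by
              funext x
              by_cases h : (x, p) ∈ W <;> simp [indicator_apply, h]
            rw [heq, lintegral_indicator_one hsec]
            rfl
    rw [hrep s, hrep t]
    refine lintegral_mono fun p => ?_
    by_cases hp : 0 < p.1 ∧ 0 < p.2
    · have e1 : ∀ r : ℝ, {x : ℝ | (0 < p.1 ∧ p.1 < f x) ∧ (0 < p.2 ∧ p.2 < f (x - r))}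
          = {x : ℝ | p.1 < f x ∧ p.2 < f (x - r)} := by
        intro r; ext x
        simp only [mem_setOf_eq, hp.1, hp.2, true_and]
      rw [e1 s, e1 t]
      exact HL_slice hmono hanti p.1 p.2 hs hst
    · have e2 : ∀ r : ℝ, {x : ℝ | (0 < p.1 ∧ p.1 < f x) ∧ (0 < p.2 ∧ p.2 < f (x - r))}
          = (∅ : Set ℝ) := by
        intro r; ext x
        simp only [mem_setOf_eq, mem_empty_iff_false, iff_false]
        rintro ⟨⟨h1, _⟩, ⟨h2, _⟩⟩
        exact hp ⟨h1, h2⟩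
      rw [e2 s, e2 t]
  -- antitone on [0, ∞)
  have hanti_g : AntitoneOn g (Ici 0) := by
    intro s hs t ht hst
    have h := key s t hs hst
    rw [hG s, hG t] at h
    exact (ENNReal.ofReal_le_ofReal_iff (hgt0 s)).mp h
  -- monotone on (−∞, 0]
  have hmono_g : MonotoneOn g (Iic 0) := by
    intro s hs t ht hst
    have hs' : (0:ℝ) ≤ -t := by simpa using ht
    have hst' : -t ≤ -s := by linarith
    have h := hanti_g (mem_Ici.mpr hs') (mem_Ici.mpr (le_trans hs' hst')) hst'
    have es : g (-(-s)) = g (-s) := heven (-s)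
    have et : g (-(-t)) = g (-t) := heven (-t)
    rw [neg_neg] at es et
    calc g s = g (-s) := es
      _ ≤ g (-t) := h
      _ = g t := et.symm
  -- the density identity
  refine ⟨?_, heven, hanti_g, hmono_g⟩
  have hF1 : ∫⁻ x, F x = 1 := by
    rw [← ofReal_integral_eq_lintegral_ofReal hfint (ae_of_all _ hf0), hf1, ENNReal.ofReal_one]
  set ν : Measure ℝ := volume.withDensity F with hν_def
  haveI hνp : IsProbabilityMeasure ν := by
    constructor
    show (volume.withDensity F) univ = 1
    rw [withDensity_apply _ MeasurableSet.univ, Measure.restrict_univ, hF1]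
  have hmapprod : Measure.map (fun ω => (X ω, Y ω)) ℙ = ν.prod ν := by
    rw [(indepFun_iff_map_prod_eq_prod_map_map hX.aemeasurable hY.aemeasurable).mp hindep,
      hXd, hYd]
  have hcomp : Measure.map (fun ω : Ω => X ω - Y ω) (ℙ : Measure Ω)
      = Measure.map (fun p : ℝ × ℝ => p.1 - p.2) (ν.prod ν) := by
    rw [← hmapprod, Measure.map_map (show Measurable (fun p : ℝ × ℝ => p.1 - p.2) from measurable_fst.sub measurable_snd) (hX.prodMk hY)]
    rfl
  rw [hcomp]
  ext s hs
  rw [Measure.map_apply (show Measurable (fun p : ℝ × ℝ => p.1 - p.2) from measurable_fst.sub measurable_snd) hs, withDensity_apply _ hs]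
  have hsub : MeasurableSet ((fun p : ℝ × ℝ => p.1 - p.2) ⁻¹' s) :=
    (measurable_fst.sub measurable_snd) hs
  rw [Measure.prod_apply hsub]
  -- compute the inner ν-measure
  have hinner : ∀ x : ℝ, ν (Prod.mk x ⁻¹' ((fun p : ℝ × ℝ => p.1 - p.2) ⁻¹' s))
      = ∫⁻ u, s.indicator 1 u * F (x - u) := by
    intro x
    have hTset : Prod.mk x ⁻¹' ((fun p : ℝ × ℝ => p.1 - p.2) ⁻¹' s)
        = (fun y : ℝ => x - y) ⁻¹' s := rfl
    have hT : MeasurableSet ((fun y : ℝ => x - y) ⁻¹' s) :=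
      (measurable_const.sub measurable_id) hs
    rw [hTset, hν_def, withDensity_apply _ hT, ← lintegral_indicator hT]
    have heq : (fun y => ((fun y : ℝ => x - y) ⁻¹' s).indicator F y)
        = fun y => (fun u => s.indicator 1 u * F (x - u)) (x - y) := by
      funext y
      have hxy : x - (x - y) = y := by ring
      by_cases h : x - y ∈ s <;> simp [indicator_apply, h, hxy]
    rw [heq]
    exact (Measure.measurePreserving_sub_left volume x).lintegral_comp
      ((measurable_one.indicator hs).mul (hFm.comp (measurable_const.sub measurable_id)))
  rw [lintegral_congr hinner]
  have hinmeas : Measurable fun u : ℝ => s.indicator (1 : ℝ → ℝ≥0∞) u :=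
    measurable_one.indicator hs
  have houter : Measurable fun x : ℝ => ∫⁻ u, s.indicator 1 u * F (x - u) := by
    apply Measurable.lintegral_prod_right
    exact (hinmeas.comp measurable_snd).mul (hFm.comp (measurable_fst.sub measurable_snd))
  rw [hν_def, lintegral_withDensity_eq_lintegral_mul volume hFm houter]
  calc ∫⁻ x, (F * fun x => ∫⁻ u, s.indicator 1 u * F (x - u)) x
      = ∫⁻ x, ∫⁻ u, F x * (s.indicator 1 u * F (x - u)) := by
        refine lintegral_congr fun x => ?_
        show F x * ∫⁻ u, s.indicator 1 u * F (x - u) = _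
        have hm1 : Measurable fun u : ℝ => s.indicator 1 u * F (x - u) :=
          hinmeas.mul (hFm.comp (measurable_const.sub measurable_id))
        rw [← lintegral_const_mul (F x) hm1]
    _ = ∫⁻ u, ∫⁻ x, F x * (s.indicator 1 u * F (x - u)) := by
        apply lintegral_lintegral_swap
        apply Measurable.aemeasurable
        exact (hFm.comp measurable_fst).mul
          ((hinmeas.comp measurable_snd).mul (hFm.comp (measurable_fst.sub measurable_snd)))
    _ = ∫⁻ u, s.indicator 1 u * ENNReal.ofReal (g u) := by
        refine lintegral_congr fun u => ?_
        have hre : (fun x => F x * (s.indicator 1 u * F (x - u)))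
            = fun x => s.indicator 1 u * (F x * F (x - u)) := by
          funext x; ring
        have hm2 : Measurable fun x : ℝ => F x * F (x - u) :=
          hFm.mul (hFm.comp (measurable_id.sub_const u))
        rw [hre, lintegral_const_mul (s.indicator 1 u) hm2, hG u]
    _ = ∫⁻ u in s, ENNReal.ofReal (g u) := by
        rw [← lintegral_indicator hs]
        refine lintegral_congr fun u => ?_
        by_cases h : u ∈ s <;> simp [indicator_apply, h]
end

section
/- For every integer k ≥ 2, all real numbers λ, μ, and all x₁, …, x_k ∈ ℝ, the k-th central moment kernel satisfies ψ_k(λx₁ + μ, λx₂ + μ, …, λx_k + μ) = λ^k · ψ_k(x₁, …, x_k). -/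
open Finset

/-- The `k`-th central moment kernel (Heffernan 1997):
`ψ_k(x₁,…,x_k) = Σ_{j=0}^{k−2} (−1)^j (1/(k−j)) Σ* x_{i₁}^{k−j} x_{i₂} ⋯ x_{i_{j+1}}
  + (−1)^{k−1} (k−1) x₁ ⋯ x_k`,
where `Σ*` runs over all pairwise distinct indices `i₁,…,i_{j+1}` with
`i₂ < i₃ < ⋯ < i_{j+1}` (i.e. over an index `i₁` and a `j`-element subset of the
remaining indices). -/
noncomputable def psi (k : ℕ) (x : Fin k → ℝ) : ℝ :=
  (∑ j ∈ Finset.range (k - 1), (-1 : ℝ) ^ j * (1 / ((k : ℝ) - j)) *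
      ∑ i1 : Fin k, ∑ S ∈ Finset.powersetCard j (Finset.univ.erase i1),
        x i1 ^ (k - j) * ∏ i ∈ S, x i)
    + (-1 : ℝ) ^ (k - 1) * ((k : ℝ) - 1) * ∏ i, x i

namespace PsiAux

/-- Elementary symmetric polynomial evaluated at a real vector. -/
noncomputable def E (k a : ℕ) (y : Fin k → ℝ) : ℝ :=
  ∑ S ∈ Finset.powersetCard a (Finset.univ : Finset (Fin k)), ∏ i ∈ S, y i

/-- Power sum evaluated at a real vector. -/
noncomputable def P (k m : ℕ) (y : Fin k → ℝ) : ℝ := ∑ i, y i ^ m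

/-- The coefficient `Σ_{j=a}^{k-2} 1/(k-j)`. -/
noncomputable def c (k a : ℕ) : ℝ := ∑ j ∈ Finset.Ico a (k-1), (1 / ((k:ℝ) - j))

/-- Derivative of `E` with respect to a common shift. -/
noncomputable def dE (k a : ℕ) (y : Fin k → ℝ) : ℝ :=
  if a = 0 then 0 else ((k - (a-1) : ℕ):ℝ) * E k (a-1) y

lemma E_zero (k : ℕ) (y : Fin k → ℝ) : E k 0 y = 1 := by simp [E]

lemma E_top (k : ℕ) (y : Fin k → ℝ) : E k k y = ∏ i, y i := by
  have : Finset.powersetCard k (Finset.univ : Finset (Fin k)) = {Finset.univ} := by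
    simpa using Finset.powersetCard_self (Finset.univ : Finset (Fin k))
  rw [E, this, Finset.sum_singleton]

lemma E_eq_aeval (k a : ℕ) (y : Fin k → ℝ) :
    (MvPolynomial.aeval y) (MvPolynomial.esymm (Fin k) ℝ a) = E k a y := by
  simp [MvPolynomial.esymm, E]

lemma P_eq_aeval (k m : ℕ) (y : Fin k → ℝ) :
    (MvPolynomial.aeval y) (MvPolynomial.psum (Fin k) ℝ m) = P k m y := by
  simp [MvPolynomial.psum, P]

lemma newton (k m : ℕ) (y : Fin k → ℝ) :
    ∑ b ∈ range m, (-1:ℝ)^b * E k b y * P k (m-b) y = (-1:ℝ)^(m+1) * m * E k m y := by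
  have h := MvPolynomial.mul_esymm_eq_sum (Fin k) ℝ m
  have h2 := congrArg (MvPolynomial.aeval y) h
  simp only [map_mul, map_sum, map_pow, map_neg, map_one, map_natCast,
    E_eq_aeval, P_eq_aeval] at h2
  rw [Finset.sum_filter, Finset.Nat.sum_antidiagonal_eq_sum_range_succ_mk,
    Finset.sum_range_succ, if_neg (lt_irrefl m), add_zero] at h2
  have h4 : ∀ b ∈ range m,
      (if (b, m - b).1 < m then (-1:ℝ)^(b, m-b).1 * E k (b, m-b).1 y * P k (b, m-b).2 y else 0)
      = (-1:ℝ)^b * E k b y * P k (m-b) y := by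
    intro b hb
    rw [if_pos (Finset.mem_range.mp hb)]
  rw [Finset.sum_congr rfl h4] at h2
  have hsq : ((-1:ℝ)^(m+1)) * ((-1:ℝ)^(m+1)) = 1 := by
    rw [← pow_add]; exact Even.neg_one_pow ⟨m+1, by ring⟩
  calc ∑ b ∈ range m, (-1:ℝ)^b * E k b y * P k (m-b) y
      = ((-1:ℝ)^(m+1) * (-1:ℝ)^(m+1)) * ∑ b ∈ range m, (-1:ℝ)^b * E k b y * P k (m-b) y := by
        rw [hsq, one_mul]
    _ = (-1:ℝ)^(m+1) * ((m:ℝ) * E k m y) := by rw [mul_assoc, ← h2]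
    _ = (-1:ℝ)^(m+1) * m * E k m y := by ring

lemma erase_expand (k : ℕ) (i : Fin k) (j : ℕ) (y : Fin k → ℝ) :
    ∑ S ∈ Finset.powersetCard j ((Finset.univ : Finset (Fin k)).erase i), ∏ l ∈ S, y l
      = ∑ l ∈ range (j+1), (-1:ℝ)^l * y i ^ l * E k (j-l) y := by
  induction j with
  | zero => simp [E_zero]
  | succ j ih =>
    have hins : insert i ((Finset.univ : Finset (Fin k)).erase i) = Finset.univ :=
      Finset.insert_erase (Finset.mem_univ i)
    have hnot : i ∉ (Finset.univ : Finset (Fin k)).erase i := Finset.notMem_erase i _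
    have hdisj : Disjoint (Finset.powersetCard (j+1) ((Finset.univ : Finset (Fin k)).erase i))
        ((Finset.powersetCard j ((Finset.univ : Finset (Fin k)).erase i)).image (insert i)) := by
      rw [Finset.disjoint_left]
      intro S hS hS'
      obtain ⟨hsub, -⟩ := Finset.mem_powersetCard.mp hS
      obtain ⟨T, hT, rfl⟩ := Finset.mem_image.mp hS'
      exact hnot (hsub (Finset.mem_insert_self i T))
    have hinj : ∀ S ∈ Finset.powersetCard j ((Finset.univ : Finset (Fin k)).erase i),
        ∀ T ∈ Finset.powersetCard j ((Finset.univ : Finset (Fin k)).erase i),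
        insert i S = insert i T → S = T := by
      intro S hS T hT hST
      have hiS : i ∉ S := fun h => hnot ((Finset.mem_powersetCard.mp hS).1 h)
      have hiT : i ∉ T := fun h => hnot ((Finset.mem_powersetCard.mp hT).1 h)
      rw [← Finset.erase_insert hiS, hST, Finset.erase_insert hiT]
    have hsplit : E k (j+1) y
        = (∑ S ∈ Finset.powersetCard (j+1) ((Finset.univ : Finset (Fin k)).erase i), ∏ l ∈ S, y l)
          + y i * ∑ S ∈ Finset.powersetCard j ((Finset.univ : Finset (Fin k)).erase i), ∏ l ∈ S, y l := by
      rw [E]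
      conv_lhs => rw [← hins]
      rw [Finset.powersetCard_succ_insert hnot, Finset.sum_union hdisj]
      congr 1
      rw [Finset.sum_image hinj, Finset.mul_sum]
      refine Finset.sum_congr rfl fun S hS => ?_
      have hiS : i ∉ S := fun h => hnot ((Finset.mem_powersetCard.mp hS).1 h)
      rw [Finset.prod_insert hiS]
    have hmain : ∑ S ∈ Finset.powersetCard (j+1) ((Finset.univ : Finset (Fin k)).erase i), ∏ l ∈ S, y l
        = E k (j+1) y - y i * ∑ l ∈ range (j+1), (-1:ℝ)^l * y i ^ l * E k (j-l) y := by
      rw [← ih]; rw [hsplit]; ring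
    rw [hmain]
    conv_rhs => rw [Finset.sum_range_succ']
    have hterm : ∀ l ∈ range (j+1), (-1:ℝ)^(l+1) * y i ^ (l+1) * E k (j+1-(l+1)) y
        = -(y i * ((-1:ℝ)^l * y i ^ l * E k (j-l) y)) := by
      intro l hl
      have h1 : j+1-(l+1) = j - l := by omega
      rw [h1]; ring
    rw [Finset.sum_congr rfl hterm, Finset.sum_neg_distrib]
    simp only [pow_zero, one_mul, Nat.sub_zero]
    rw [Finset.mul_sum]
    ring

lemma sum_erase_prod (k a : ℕ) (y : Fin k → ℝ) :
    ∑ S ∈ Finset.powersetCard (a+1) (Finset.univ : Finset (Fin k)), ∑ i ∈ S, ∏ j ∈ S.erase i, y j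
      = ((k - a : ℕ) : ℝ) * E k a y := by
  have key : ∑ S ∈ Finset.powersetCard (a+1) (Finset.univ : Finset (Fin k)), ∑ i ∈ S, ∏ j ∈ S.erase i, y j
      = ∑ T ∈ Finset.powersetCard a (Finset.univ : Finset (Fin k)), ∑ i ∈ Finset.univ \ T, ∏ j ∈ T, y j := by
    rw [Finset.sum_sigma', Finset.sum_sigma']
    refine Finset.sum_nbij' (fun p => ⟨p.1.erase p.2, p.2⟩) (fun p => ⟨insert p.2 p.1, p.2⟩)
      ?_ ?_ ?_ ?_ ?_
    · rintro ⟨S, i⟩ hp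
      simp only [Finset.mem_sigma, Finset.mem_powersetCard] at hp ⊢
      obtain ⟨⟨hsub, hcard⟩, hi⟩ := hp
      refine ⟨⟨Finset.Subset.trans (Finset.erase_subset _ _) hsub, ?_⟩, ?_⟩
      · rw [Finset.card_erase_of_mem hi, hcard]; rfl
      · simp
    · rintro ⟨T, i⟩ hp
      simp only [Finset.mem_sigma, Finset.mem_powersetCard, Finset.mem_sdiff] at hp ⊢
      obtain ⟨⟨hsub, hcard⟩, -, hi⟩ := hp
      refine ⟨⟨Finset.subset_univ _, ?_⟩, Finset.mem_insert_self _ _⟩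
      rw [Finset.card_insert_of_notMem hi, hcard]
    · rintro ⟨S, i⟩ hp
      simp only [Finset.mem_sigma] at hp
      simp [Finset.insert_erase hp.2]
    · rintro ⟨T, i⟩ hp
      simp only [Finset.mem_sigma, Finset.mem_sdiff] at hp
      simp [Finset.erase_insert hp.2.2]
    · rintro ⟨S, i⟩ hp
      rfl
  rw [key, E, Finset.mul_sum]
  refine Finset.sum_congr rfl fun T hT => ?_
  obtain ⟨-, hcard⟩ := Finset.mem_powersetCard.mp hT
  rw [Finset.sum_const, Finset.card_sdiff_of_subset (Finset.subset_univ T), hcard, Finset.card_univ,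
    Fintype.card_fin, nsmul_eq_mul]

lemma sign_lemma (j a : ℕ) (ha : a ≤ j) : ((-1:ℝ))^j * (-1:ℝ)^(j-a) = (-1:ℝ)^a := by
  rw [← pow_add]
  have h : j + (j - a) = a + 2*(j-a) := by omega
  rw [h, pow_add, pow_mul]
  simp

lemma psi_rep (k : ℕ) (hk : 2 ≤ k) (y : Fin k → ℝ) :
    psi k y = ∑ a ∈ range (k-1), (-1:ℝ)^a * c k a * E k a y * P k (k-a) y
      + (-1:ℝ)^(k-1) * ((k:ℝ)-1) * E k k y := by
  rw [psi, E_top]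
  congr 1
  have step1 : ∀ j ∈ range (k-1),
      (-1:ℝ)^j * (1/((k:ℝ) - j)) * ∑ i1 : Fin k,
          ∑ S ∈ Finset.powersetCard j (Finset.univ.erase i1), y i1 ^ (k-j) * ∏ i ∈ S, y i
      = ∑ a ∈ range (j+1), (1/((k:ℝ)-j)) * ((-1:ℝ)^a * E k a y * P k (k-a) y) := by
    intro j hj
    have hjk : j < k - 1 := Finset.mem_range.mp hj
    have h1 : ∀ i1 : Fin k,
        ∑ S ∈ Finset.powersetCard j (Finset.univ.erase i1), y i1 ^ (k-j) * ∏ i ∈ S, y i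
        = ∑ l ∈ range (j+1), (-1:ℝ)^l * E k (j-l) y * y i1 ^ (k-j+l) := by
      intro i1
      rw [← Finset.mul_sum, erase_expand, Finset.mul_sum]
      refine Finset.sum_congr rfl fun l hl => ?_
      rw [pow_add]
      ring
    rw [Finset.sum_congr rfl fun i1 _ => h1 i1, Finset.sum_comm]
    have h2 : ∀ l ∈ range (j+1),
        ∑ i1 : Fin k, (-1:ℝ)^l * E k (j-l) y * y i1 ^ (k-j+l)
          = (-1:ℝ)^l * E k (j-l) y * P k (k-j+l) y := by
      intro l hl
      rw [← Finset.mul_sum]; rfl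
    rw [Finset.sum_congr rfl h2]
    rw [← Finset.sum_range_reflect (fun l => (-1:ℝ)^l * E k (j-l) y * P k (k-j+l) y) (j+1)]
    rw [Finset.mul_sum]
    refine Finset.sum_congr rfl fun a ha => ?_
    have haj : a ≤ j := by have := Finset.mem_range.mp ha; omega
    have e1 : j + 1 - 1 - a = j - a := by omega
    have e2 : j - (j - a) = a := by omega
    have e3 : k - j + (j - a) = k - a := by omega
    rw [e1, e2, e3]
    have := sign_lemma j a haj
    calc (-1:ℝ)^j * (1/((k:ℝ)-j)) * ((-1:ℝ)^(j-a) * E k a y * P k (k-a) y)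
        = ((-1:ℝ)^j * (-1:ℝ)^(j-a)) * (1/((k:ℝ)-j)) * E k a y * P k (k-a) y := by ring
      _ = (1/((k:ℝ)-j)) * ((-1:ℝ)^a * E k a y * P k (k-a) y) := by rw [this]; ring
  rw [Finset.sum_congr rfl step1]
  have hswap := Finset.sum_Ico_Ico_comm 0 (k-1)
    (fun a j => (1/((k:ℝ)-j)) * ((-1:ℝ)^a * E k a y * P k (k-a) y))
  simp only [← Finset.range_eq_Ico] at hswap
  rw [← hswap]
  refine Finset.sum_congr rfl fun a ha => ?_
  rw [c, Finset.mul_sum, Finset.sum_mul, Finset.sum_mul]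
  exact Finset.sum_congr rfl fun j hj => by ring

lemma c_diff (k b : ℕ) (hb : b < k - 1) : c k b - c k (b+1) = 1/((k:ℝ) - b) := by
  rw [c, c, Finset.sum_eq_sum_Ico_succ_bot hb]
  ring

lemma c_last (k : ℕ) (hk : 2 ≤ k) : c k (k-2) = 1/2 := by
  have h : k - 1 = (k-2) + 1 := by omega
  rw [c, h, Nat.Ico_succ_singleton, Finset.sum_singleton]
  have h2 : ((k-2 : ℕ):ℝ) = (k:ℝ) - 2 := by
    push_cast [Nat.cast_sub (by omega : 2 ≤ k)]; ring
  rw [h2]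
  norm_num

lemma deriv_zero (k : ℕ) (hk : 2 ≤ k) (y : Fin k → ℝ) :
    ∑ a ∈ range (k-1),
        ((((-1:ℝ)^a * c k a) * dE k a y) * P k (k-a) y
          + (((-1:ℝ)^a * c k a) * E k a y) * ((((k-a : ℕ)):ℝ) * P k (k-a-1) y))
      + ((-1:ℝ)^(k-1) * ((k:ℝ)-1)) * dE k k y = 0 := by
  rw [Finset.sum_add_distrib]
  have hA : ∑ a ∈ range (k-1), (((-1:ℝ)^a * c k a) * dE k a y) * P k (k-a) y
      = ∑ b ∈ range (k-2), (((-1:ℝ)^(b+1) * c k (b+1)) * (((k - b:ℕ):ℝ) * E k b y)) * P k (k-(b+1)) y := by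
    have h : k - 1 = (k-2) + 1 := by omega
    rw [h, Finset.sum_range_succ']
    have h0 : (((-1:ℝ)^0 * c k 0) * dE k 0 y) * P k (k-0) y = 0 := by simp [dE]
    rw [h0, add_zero]
    refine Finset.sum_congr rfl fun b hb => ?_
    rw [dE, if_neg (Nat.succ_ne_zero b)]
    simp [Nat.add_sub_cancel]
  have hB : ∑ a ∈ range (k-1), (((-1:ℝ)^a * c k a) * E k a y) * ((((k-a : ℕ)):ℝ) * P k (k-a-1) y)
      = (∑ b ∈ range (k-2), (((-1:ℝ)^b * c k b) * E k b y) * ((((k-b : ℕ)):ℝ) * P k (k-b-1) y))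
        + (((-1:ℝ)^(k-2) * c k (k-2)) * E k (k-2) y) * ((((k-(k-2) : ℕ)):ℝ) * P k (k-(k-2)-1) y) := by
    have h : k - 1 = (k-2) + 1 := by omega
    rw [h, Finset.sum_range_succ]
  rw [hA, hB]
  have hcomb : ∀ b ∈ range (k-2),
      (((-1:ℝ)^(b+1) * c k (b+1)) * (((k - b:ℕ):ℝ) * E k b y)) * P k (k-(b+1)) y
        + (((-1:ℝ)^b * c k b) * E k b y) * ((((k-b : ℕ)):ℝ) * P k (k-b-1) y)
      = (-1:ℝ)^b * E k b y * P k ((k-1)-b) y := by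
    intro b hb
    have hb' : b < k - 2 := Finset.mem_range.mp hb
    have e1 : k - (b+1) = k - b - 1 := by omega
    have e2 : k - b - 1 = (k-1) - b := by omega
    have e3 : ((k - b : ℕ):ℝ) = (k:ℝ) - b := by
      push_cast [Nat.cast_sub (by omega : b ≤ k)]; ring
    have e4 : c k b - c k (b+1) = 1/((k:ℝ) - b) := c_diff k b (by omega)
    have e5 : (k:ℝ) - b ≠ 0 := by
      have : (b:ℝ) < (k:ℝ) := by exact_mod_cast (by omega : b < k)
      linarith
    rw [e1, e2, e3, pow_succ]
    have : c k (b+1) = c k b - 1/((k:ℝ)-b) := by linarith [e4]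
    rw [this]
    field_simp
    ring
  have hsplit : (∑ b ∈ range (k-2), (((-1:ℝ)^(b+1) * c k (b+1)) * (((k - b:ℕ):ℝ) * E k b y)) * P k (k-(b+1)) y)
      + ((∑ b ∈ range (k-2), (((-1:ℝ)^b * c k b) * E k b y) * ((((k-b : ℕ)):ℝ) * P k (k-b-1) y))
        + (((-1:ℝ)^(k-2) * c k (k-2)) * E k (k-2) y) * ((((k-(k-2) : ℕ)):ℝ) * P k (k-(k-2)-1) y))
      = (∑ b ∈ range (k-2), (-1:ℝ)^b * E k b y * P k ((k-1)-b) y)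
        + (((-1:ℝ)^(k-2) * c k (k-2)) * E k (k-2) y) * ((((k-(k-2) : ℕ)):ℝ) * P k (k-(k-2)-1) y) := by
    rw [← add_assoc, ← Finset.sum_add_distrib, Finset.sum_congr rfl hcomb]
  rw [hsplit]
  have hlast : (((-1:ℝ)^(k-2) * c k (k-2)) * E k (k-2) y) * ((((k-(k-2) : ℕ)):ℝ) * P k (k-(k-2)-1) y)
      = (-1:ℝ)^(k-2) * E k (k-2) y * P k ((k-1)-(k-2)) y := by
    have e1 : k - (k-2) = 2 := by omega
    have e2 : k - (k-2) - 1 = 1 := by omega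
    have e3 : (k-1) - (k-2) = 1 := by omega
    rw [e2, e3, e1, c_last k hk]
    push_cast
    ring
  rw [hlast]
  have hnewt : (∑ b ∈ range (k-2), (-1:ℝ)^b * E k b y * P k ((k-1)-b) y)
      + (-1:ℝ)^(k-2) * E k (k-2) y * P k ((k-1)-(k-2)) y
      = (-1:ℝ)^k * ((k:ℝ)-1) * E k (k-1) y := by
    have h : k - 1 = (k-2) + 1 := by omega
    have hsum : ∑ b ∈ range (k-1), (-1:ℝ)^b * E k b y * P k ((k-1)-b) y
        = (∑ b ∈ range (k-2), (-1:ℝ)^b * E k b y * P k ((k-1)-b) y)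
          + (-1:ℝ)^(k-2) * E k (k-2) y * P k ((k-1)-(k-2)) y := by
      rw [h, Finset.sum_range_succ]
    rw [← hsum, newton]
    have e1 : (k-1) + 1 = k := by omega
    have e2 : ((k-1 : ℕ):ℝ) = (k:ℝ) - 1 := by
      push_cast [Nat.cast_sub (by omega : 1 ≤ k)]; ring
    rw [e1, e2]
  rw [hnewt]
  have hdEk : dE k k y = E k (k-1) y := by
    rw [dE, if_neg (by omega : ¬ k = 0)]
    have : k - (k-1) = 1 := by omega
    rw [this]
    norm_num
  rw [hdEk]
  have hsign : (-1:ℝ)^k = -(-1:ℝ)^(k-1) := by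
    conv_lhs => rw [show k = (k-1)+1 by omega]
    rw [pow_succ]; ring
  rw [hsign]
  ring

lemma hasDerivAt_P (k m : ℕ) (x : Fin k → ℝ) (t : ℝ) :
    HasDerivAt (fun s => P k m (fun i => x i + s)) (((m:ℕ):ℝ) * P k (m-1) (fun i => x i + t)) t := by
  have h : ∀ i ∈ (Finset.univ : Finset (Fin k)),
      HasDerivAt (fun s => (x i + s)^m) ((m:ℝ) * (x i + t)^(m-1)) t := by
    intro i _
    have h0 : HasDerivAt (fun s : ℝ => x i + s) 1 t := (hasDerivAt_id t).const_add (x i)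
    simpa using h0.fun_pow m
  have h2 := HasDerivAt.fun_sum h
  have h3 : ∑ i : Fin k, (m:ℝ) * (x i + t)^(m-1) = ((m:ℕ):ℝ) * P k (m-1) (fun i => x i + t) := by
    rw [P, Finset.mul_sum]
  rw [h3] at h2
  exact h2

lemma hasDerivAt_E (k a : ℕ) (x : Fin k → ℝ) (t : ℝ) :
    HasDerivAt (fun s => E k a (fun i => x i + s)) (dE k a (fun i => x i + t)) t := by
  cases a with
  | zero =>
    have h : (fun s => E k 0 (fun i => x i + s)) = fun _ => (1:ℝ) :=
      funext fun s => E_zero k _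
    rw [h, dE, if_pos rfl]
    exact hasDerivAt_const t 1
  | succ a =>
    have hS : ∀ S ∈ Finset.powersetCard (a+1) (Finset.univ : Finset (Fin k)),
        HasDerivAt (fun s => ∏ i ∈ S, (x i + s)) (∑ i ∈ S, ∏ j ∈ S.erase i, (x j + t)) t := by
      intro S _
      have h := HasDerivAt.fun_finsetProd (u := S) (f := fun i s => x i + s) (f' := fun _ => 1)
        (fun i _ => (hasDerivAt_id t).const_add (x i))
      simpa using h
    have h2 := HasDerivAt.fun_sum hS
    rw [sum_erase_prod k a (fun i => x i + t)] at h2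
    have h3 : dE k (a+1) (fun i => x i + t) = ((k - a : ℕ):ℝ) * E k a (fun i => x i + t) := by
      rw [dE, if_neg (Nat.succ_ne_zero a), Nat.add_sub_cancel]
    rw [h3]
    exact h2

lemma psi_translate (k : ℕ) (hk : 2 ≤ k) (x : Fin k → ℝ) (μ : ℝ) :
    psi k (fun i => x i + μ) = psi k x := by
  have hg : ∀ t : ℝ, HasDerivAt (fun s => psi k (fun i => x i + s)) 0 t := by
    intro t
    have hrep : (fun s => psi k (fun i => x i + s))
        = fun s => (∑ a ∈ range (k-1), (-1:ℝ)^a * c k a * E k a (fun i => x i + s) * P k (k-a) (fun i => x i + s))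
          + (-1:ℝ)^(k-1) * ((k:ℝ)-1) * E k k (fun i => x i + s) :=
      funext fun s => psi_rep k hk _
    rw [hrep]
    have hsum : HasDerivAt
        (fun s => ∑ a ∈ range (k-1), (-1:ℝ)^a * c k a * E k a (fun i => x i + s) * P k (k-a) (fun i => x i + s))
        (∑ a ∈ range (k-1),
          ((((-1:ℝ)^a * c k a) * dE k a (fun i => x i + t)) * P k (k-a) (fun i => x i + t)
            + (((-1:ℝ)^a * c k a) * E k a (fun i => x i + t)) * ((((k-a : ℕ)):ℝ) * P k (k-a-1) (fun i => x i + t)))) t := by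
      refine HasDerivAt.fun_sum fun a ha => ?_
      have hE := (hasDerivAt_E k a x t).const_mul ((-1:ℝ)^a * c k a)
      have hP := hasDerivAt_P k (k-a) x t
      exact hE.mul hP
    have htail := (hasDerivAt_E k k x t).const_mul ((-1:ℝ)^(k-1) * ((k:ℝ)-1))
    have h := hsum.add htail
    rw [deriv_zero k hk (fun i => x i + t)] at h
    exact h
  have hconst := is_const_of_deriv_eq_zero (f := fun s => psi k (fun i => x i + s))
    (fun t => (hg t).differentiableAt) (fun t => (hg t).deriv) μ 0
  have h0 : (fun i => x i + (0:ℝ)) = x := funext fun i => add_zero (x i)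
  rw [h0] at hconst
  exact hconst

lemma psi_scale (k : ℕ) (lam : ℝ) (x : Fin k → ℝ) :
    psi k (fun i => lam * x i) = lam ^ k * psi k x := by
  rw [psi, psi, mul_add]
  congr 1
  · rw [Finset.mul_sum]
    refine Finset.sum_congr rfl fun j hj => ?_
    have hjk : j < k - 1 := Finset.mem_range.mp hj
    have hinner : ∑ i1 : Fin k, ∑ S ∈ Finset.powersetCard j (Finset.univ.erase i1),
          (lam * x i1) ^ (k-j) * ∏ i ∈ S, (lam * x i)
        = lam ^ k * ∑ i1 : Fin k, ∑ S ∈ Finset.powersetCard j (Finset.univ.erase i1),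
          x i1 ^ (k-j) * ∏ i ∈ S, x i := by
      rw [Finset.mul_sum]
      refine Finset.sum_congr rfl fun i1 _ => ?_
      rw [Finset.mul_sum]
      refine Finset.sum_congr rfl fun S hS => ?_
      have hcard : S.card = j := (Finset.mem_powersetCard.mp hS).2
      rw [mul_pow, Finset.prod_mul_distrib, Finset.prod_const, hcard]
      have hpow : lam^(k-j) * lam^j = lam^k := by
        rw [← pow_add]
        congr 1
        omega
      calc lam^(k-j) * x i1 ^(k-j) * (lam^j * ∏ i ∈ S, x i)
          = (lam^(k-j) * lam^j) * (x i1 ^(k-j) * ∏ i ∈ S, x i) := by ring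
        _ = lam^k * (x i1 ^(k-j) * ∏ i ∈ S, x i) := by rw [hpow]
    rw [hinner]
    ring
  · rw [Finset.prod_mul_distrib, Finset.prod_const]
    have : (Finset.univ : Finset (Fin k)).card = k := by simp
    rw [this]
    ring

end PsiAux

/-- For every integer `k ≥ 2`, all `λ, μ ∈ ℝ` and all `x₁,…,x_k ∈ ℝ`,
`ψ_k(λx₁ + μ, …, λx_k + μ) = λ^k ψ_k(x₁,…,x_k)`. -/
theorem stmt2 (k : ℕ) (hk : 2 ≤ k) (lam mu : ℝ) (x : Fin k → ℝ) :
    psi k (fun i => lam * x i + mu) = lam ^ k * psi k x := by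
  have h2 : psi k (fun i => lam * x i + mu) = psi k (fun i => lam * x i) :=
    PsiAux.psi_translate k hk (fun i => lam * x i) mu
  rw [h2, PsiAux.psi_scale k lam x]
end

section
/- For every integer k ≥ 2, every integer i with 1 ≤ i ≤ k − 1, and all real numbers a, b, the k-th central moment kernel evaluated at i copies of a followed by k − i copies of b satisfies ψ_k(a, …, a, b, …, b) = (−1)^{i+1} · (a − b)^k / C(k, i), where C(k, i) is the binomial coefficient. -/
open Finset

section Aux
open Nat

lemma Esum_const {α : Type*} [DecidableEq α] (T : Finset α) (x : α → ℝ) (c : ℝ)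
    (h : ∀ t ∈ T, x t = c) (j : ℕ) :
    ∑ S ∈ Finset.powersetCard j T, ∏ t ∈ S, x t = (T.card.choose j : ℝ) * c ^ j := by
  rw [Finset.sum_congr rfl (fun S hS => ?_), Finset.sum_const, nsmul_eq_mul,
    Finset.card_powersetCard]
  obtain ⟨hsub, hcard⟩ := Finset.mem_powersetCard.mp hS
  rw [Finset.prod_congr rfl (fun t ht => h t (hsub ht)), Finset.prod_const, hcard]

lemma Esum_insert {α : Type*} [DecidableEq α] (a : α) (T : Finset α) (ha : a ∉ T)
    (x : α → ℝ) (j : ℕ) :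
    ∑ S ∈ Finset.powersetCard (j+1) (insert a T), ∏ t ∈ S, x t
      = (∑ S ∈ Finset.powersetCard (j+1) T, ∏ t ∈ S, x t)
        + x a * ∑ S ∈ Finset.powersetCard j T, ∏ t ∈ S, x t := by
  rw [Finset.powersetCard_succ_insert ha, Finset.sum_union, Finset.sum_image]
  · congr 1
    rw [Finset.mul_sum]
    refine Finset.sum_congr rfl fun S hS => ?_
    have haS : a ∉ S := fun hx => ha ((Finset.mem_powersetCard.mp hS).1 hx)
    rw [Finset.prod_insert haS]
  · intro S hS S' hS' h
    have haS : a ∉ S := fun hx => ha ((Finset.mem_powersetCard.mp hS).1 hx)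
    have haS' : a ∉ S' := fun hx => ha ((Finset.mem_powersetCard.mp hS').1 hx)
    rw [← Finset.erase_insert haS, ← Finset.erase_insert haS', h]
  · rw [Finset.disjoint_left]
    intro S hS hS'
    obtain ⟨S₀, hS₀, rfl⟩ := Finset.mem_image.mp hS'
    have : a ∈ insert a S₀ := Finset.mem_insert_self _ _
    exact (fun hx => ha ((Finset.mem_powersetCard.mp hS).1 hx)) this

lemma Esum_zero {α : Type*} [DecidableEq α] (T : Finset α) (x : α → ℝ) :
    ∑ S ∈ Finset.powersetCard 0 T, ∏ t ∈ S, x t = 1 := by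
  simp [Finset.powersetCard_zero]

lemma Esum_union {α : Type*} [DecidableEq α] (B : Finset α) (x : α → ℝ) :
    ∀ (A : Finset α), Disjoint A B → ∀ j : ℕ,
    ∑ S ∈ Finset.powersetCard j (A ∪ B), ∏ t ∈ S, x t
      = ∑ s ∈ Finset.range (j+1),
          (∑ P ∈ Finset.powersetCard s A, ∏ t ∈ P, x t)
            * (∑ Q ∈ Finset.powersetCard (j-s) B, ∏ t ∈ Q, x t) := by
  intro A
  induction A using Finset.induction_on with
  | empty =>
    intro _ j
    rw [Finset.sum_range_succ']
    have h0 : ∀ s ∈ Finset.range j,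
        (∑ P ∈ Finset.powersetCard (s+1) (∅ : Finset α), ∏ t ∈ P, x t)
          * (∑ Q ∈ Finset.powersetCard (j-(s+1)) B, ∏ t ∈ Q, x t) = 0 := by
      intro s _
      rw [Finset.powersetCard_eq_empty.mpr (by simp)]
      simp
    rw [Finset.sum_congr rfl h0, Finset.sum_const, smul_zero, zero_add, Esum_zero,
      Finset.empty_union, one_mul, Nat.sub_zero]
  | @insert a A₀ ha IH =>
    intro hd j
    have haB : a ∉ B := fun h => (Finset.disjoint_left.mp hd) (Finset.mem_insert_self a A₀) h
    have hd₀ : Disjoint A₀ B := hd.mono_left (Finset.subset_insert a A₀)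
    have haAB : a ∉ A₀ ∪ B := by simp [ha, haB]
    rw [Finset.insert_union]
    match j with
    | 0 => simp [Finset.powersetCard_zero]
    | j+1 =>
      rw [Esum_insert a (A₀ ∪ B) haAB x j, IH hd₀ (j+1), IH hd₀ j,
        Finset.sum_range_succ' (fun s => (∑ P ∈ Finset.powersetCard s A₀, ∏ t ∈ P, x t)
            * (∑ Q ∈ Finset.powersetCard (j+1-s) B, ∏ t ∈ Q, x t)) (j+1),
        Finset.sum_range_succ' (fun s => (∑ P ∈ Finset.powersetCard s (insert a A₀), ∏ t ∈ P, x t)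
            * (∑ Q ∈ Finset.powersetCard (j+1-s) B, ∏ t ∈ Q, x t)) (j+1)]
      simp only [Nat.succ_sub_succ, Nat.sub_zero]
      have h1 : ∀ s ∈ Finset.range (j+1),
          (∑ P ∈ Finset.powersetCard (s+1) (insert a A₀), ∏ t ∈ P, x t)
            * (∑ Q ∈ Finset.powersetCard (j-s) B, ∏ t ∈ Q, x t)
          = (∑ P ∈ Finset.powersetCard (s+1) A₀, ∏ t ∈ P, x t)
              * (∑ Q ∈ Finset.powersetCard (j-s) B, ∏ t ∈ Q, x t)
            + x a * ((∑ P ∈ Finset.powersetCard s A₀, ∏ t ∈ P, x t)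
              * (∑ Q ∈ Finset.powersetCard (j-s) B, ∏ t ∈ Q, x t)) := by
        intro s _
        rw [Esum_insert a A₀ ha x s]
        ring
      rw [Finset.sum_congr rfl h1, Finset.sum_add_distrib, ← Finset.mul_sum, Esum_zero, Esum_zero,
        Finset.mul_sum, Finset.mul_sum]
      ring

lemma beta_sum : ∀ (n x : ℕ),
    ∑ s ∈ Finset.range (n+1), (-1:ℝ)^s * (n.choose s : ℝ) * (1/((x:ℝ) + 1 + s))
      = (n ! : ℝ) * (x ! : ℝ) / ((n + x + 1)! : ℝ) := by
  intro n
  induction n with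
  | zero =>
    intro x
    have hx1 : ((x:ℝ) + 1) ≠ 0 := by positivity
    have hx2 : ((x ! : ℕ) : ℝ) ≠ 0 := by positivity
    simp only [Finset.sum_range_one, pow_zero, Nat.choose_zero_right, Nat.cast_one, one_mul,
      Nat.zero_add, Nat.factorial_succ, Nat.factorial_zero, Nat.cast_zero]
    push_cast
    field_simp
    ring
  | succ n IH =>
    intro x
    set g : ℕ → ℝ := fun s => (-1:ℝ)^s * (n.choose s : ℝ) * (1/((x:ℝ) + 1 + s)) with hg
    set G : ℕ → ℝ := fun s => (-1:ℝ)^s * (n.choose s : ℝ) * (1/((x:ℝ) + 2 + s)) with hG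
    have IH1 : ∑ s ∈ Finset.range (n+1), g s = (n ! : ℝ) * (x ! : ℝ) / ((n + x + 1)! : ℝ) := IH x
    have IH2 : ∑ s ∈ Finset.range (n+1), G s
        = (n ! : ℝ) * ((x+1)! : ℝ) / ((n + (x+1) + 1)! : ℝ) := by
      rw [← IH (x+1)]
      refine Finset.sum_congr rfl fun s _ => ?_
      simp only [hG]
      push_cast
      ring_nf
    have key : ∑ s ∈ Finset.range (n+1+1), (-1:ℝ)^s * ((n+1).choose s : ℝ) * (1/((x:ℝ) + 1 + s))
        = (∑ s ∈ Finset.range (n+1), g s) - ∑ s ∈ Finset.range (n+1), G s := by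
      rw [Finset.sum_range_succ'
        (fun s => (-1:ℝ)^s * ((n+1).choose s : ℝ) * (1/((x:ℝ) + 1 + s))) (n+1)]
      have h1 : ∀ s ∈ Finset.range (n+1),
          (-1:ℝ)^(s+1) * ((n+1).choose (s+1) : ℝ) * (1/((x:ℝ) + 1 + ((s+1 : ℕ) : ℝ)))
            = -G s + g (s+1) := by
        intro s _
        simp only [hg, hG, Nat.choose_succ_succ n s]
        push_cast
        ring
      rw [Finset.sum_congr rfl h1, Finset.sum_add_distrib]
      have h2 : ∑ s ∈ Finset.range (n+1), g (s+1) = (∑ s ∈ Finset.range (n+1), g s) - g 0 := by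
        have h4 := Finset.sum_range_succ' g (n+1)
        have h5 := Finset.sum_range_succ g (n+1)
        have h6 : g (n+1) = 0 := by simp [hg, Nat.choose_succ_self]
        rw [h6, add_zero] at h5
        rw [h5] at h4
        linarith
      have hf0 : (-1:ℝ)^(0:ℕ) * (((n+1).choose 0 : ℕ) : ℝ) * (1/((x:ℝ) + 1 + ((0:ℕ) : ℝ)))
          = g 0 := by
        simp [hg]
      rw [h2, Finset.sum_neg_distrib, hf0]
      ring
    rw [key, IH1, IH2]
    have e1 : ((n + (x+1) + 1)! : ℝ) = ((n:ℝ)+(x:ℝ)+2) * ((n+x+1)! : ℝ) := by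
      have h : n + (x+1) + 1 = (n + x + 1) + 1 := by omega
      rw [h, Nat.factorial_succ]
      push_cast
      ring
    have e2 : (((x+1))! : ℝ) = ((x:ℝ)+1) * (x ! : ℝ) := by
      rw [Nat.factorial_succ]; push_cast; ring
    have e3 : (((n+1) + x + 1)! : ℝ) = ((n:ℝ)+(x:ℝ)+2) * ((n+x+1)! : ℝ) := by
      have h : (n+1) + x + 1 = (n + x + 1) + 1 := by omega
      rw [h, Nat.factorial_succ]
      push_cast
      ring
    have e4 : ((n+1)! : ℝ) = ((n:ℝ)+1) * (n ! : ℝ) := by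
      rw [Nat.factorial_succ]; push_cast; ring
    rw [e1, e2, e3, e4]
    have p1 : ((n+x+1)! : ℝ) ≠ 0 := by positivity
    have p2 : ((n:ℝ)+(x:ℝ)+2) ≠ 0 := by positivity
    field_simp
    ring

lemma tri_sum (f : ℕ → ℕ → ℝ) : ∀ n : ℕ,
    ∑ j ∈ Finset.range n, ∑ s ∈ Finset.range (j+1), f s (j-s)
      = ∑ s ∈ Finset.range n, ∑ t ∈ Finset.range (n-s), f s t := by
  intro n
  induction n with
  | zero => simp
  | succ n IH =>
    rw [Finset.sum_range_succ, IH,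
      Finset.sum_range_succ (fun s => ∑ t ∈ Finset.range (n+1-s), f s t) n]
    have h1 : ∀ s ∈ Finset.range n,
        ∑ t ∈ Finset.range (n+1-s), f s t = (∑ t ∈ Finset.range (n-s), f s t) + f s (n-s) := by
      intro s hs
      have h : n+1-s = (n-s)+1 := by
        have := Finset.mem_range.mp hs; omega
      rw [h, Finset.sum_range_succ]
    rw [Finset.sum_congr rfl h1, Finset.sum_add_distrib,
      Finset.sum_range_succ (fun s => f s (n-s)) n]
    have h2 : n + 1 - n = 1 := by omega
    rw [h2, Finset.sum_range_one, Nat.sub_self]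
    ring

lemma tri_swap (f : ℕ → ℕ → ℝ) (n : ℕ) :
    ∑ s ∈ Finset.range n, ∑ t ∈ Finset.range (n-s), f s t
      = ∑ t ∈ Finset.range n, ∑ s ∈ Finset.range (n-t), f s t := by
  rw [← tri_sum f n, ← tri_sum (fun t s => f s t) n]
  refine Finset.sum_congr rfl fun j hj => ?_
  rw [← Finset.sum_range_reflect (fun s => f s (j-s)) (j+1)]
  refine Finset.sum_congr rfl fun s hs => ?_
  have hs' : s < j + 1 := Finset.mem_range.mp hs
  have h1 : j + 1 - 1 - s = j - s := by omega
  have h2 : j - (j - s) = s := by omega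
  rw [h1, h2]

lemma core (p q : ℕ) (hp : 1 ≤ p) (a b : ℝ) :
    ∑ j ∈ Finset.range (p+q), (-1:ℝ)^j * (1/(((p+q : ℕ):ℝ) - j)) * a^(p+q-j) *
        (∑ s ∈ Finset.range (j+1), ((p-1).choose s : ℝ) * (q.choose (j-s) : ℝ) * a^s * b^(j-s))
      = ∑ t ∈ Finset.range (q+1), (-1:ℝ)^(t+p+1) * ((p-1)! : ℝ) * (q ! : ℝ)
          / ((t ! : ℝ) * ((p+q-t)! : ℝ)) * a^(p+q-t) * b^t := by
  set g : ℕ → ℕ → ℝ := fun s t => (-1:ℝ)^(s+t) * (1/(((p+q : ℕ):ℝ) - ((s+t : ℕ):ℝ)))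
      * ((p-1).choose s : ℝ) * (q.choose t : ℝ) * a^(p+q-(s+t)+s) * b^t with hg
  have step1 : ∑ j ∈ Finset.range (p+q), (-1:ℝ)^j * (1/(((p+q : ℕ):ℝ) - j)) * a^(p+q-j) *
        (∑ s ∈ Finset.range (j+1), ((p-1).choose s : ℝ) * (q.choose (j-s) : ℝ) * a^s * b^(j-s))
      = ∑ j ∈ Finset.range (p+q), ∑ s ∈ Finset.range (j+1), g s (j-s) := by
    refine Finset.sum_congr rfl fun j hj => ?_
    rw [Finset.mul_sum]
    refine Finset.sum_congr rfl fun s hs => ?_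
    have hsj : s ≤ j := by
      have := Finset.mem_range.mp hs; omega
    have h1 : s + (j - s) = j := by omega
    simp only [hg, h1]
    rw [pow_add]
    ring
  rw [step1, tri_sum g (p+q), tri_swap g (p+q)]
  have step2 : ∑ t ∈ Finset.range (p+q), ∑ s ∈ Finset.range (p+q-t), g s t
      = ∑ t ∈ Finset.range (q+1), ∑ s ∈ Finset.range (p+q-t), g s t := by
    symm
    apply Finset.sum_subset
    · exact Finset.range_subset_range.mpr (by omega)
    · intro t _ ht
      have htq : q < t := by
        rcases Nat.lt_or_ge q t with h | h
        · exact h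
        · exact absurd (Finset.mem_range.mpr (by omega)) ht
      refine Finset.sum_eq_zero fun s _ => ?_
      simp only [hg]
      rw [Nat.choose_eq_zero_of_lt htq]
      simp
  rw [step2]
  refine Finset.sum_congr rfl fun t ht => ?_
  have htq : t ≤ q := by
    have := Finset.mem_range.mp ht; omega
  have step3 : ∑ s ∈ Finset.range (p+q-t), g s t = ∑ s ∈ Finset.range p, g s t := by
    symm
    apply Finset.sum_subset
    · exact Finset.range_subset_range.mpr (by omega)
    · intro s _ hs
      have hsp : p - 1 < s := by
        rcases Nat.lt_or_ge (p-1) s with h | h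
        · exact h
        · exact absurd (Finset.mem_range.mpr (by omega)) hs
      simp only [hg]
      rw [Nat.choose_eq_zero_of_lt hsp]
      simp
  rw [step3, ← Finset.sum_range_reflect (fun s => g s t) p]
  have claim : ∀ s ∈ Finset.range p, g (p-1-s) t
      = ((-1:ℝ)^(t+p+1) * (q.choose t : ℝ) * a^(p+q-t) * b^t)
        * ((-1:ℝ)^s * ((p-1).choose s : ℝ) * (1/(((q-t : ℕ):ℝ) + 1 + s))) := by
    intro s hs
    have hsp : s ≤ p - 1 := by
      have := Finset.mem_range.mp hs; omega
    have epow : (-1:ℝ)^((p-1-s)+t) = (-1:ℝ)^(t+p+1) * (-1:ℝ)^s := by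
      rw [← pow_add (-1:ℝ) (t+p+1) s, neg_one_pow_eq_pow_mod_two,
        neg_one_pow_eq_pow_mod_two (n := t+p+1+s)]
      congr 1
      omega
    have h2 : ((p-1-s : ℕ):ℝ) = (p:ℝ) - 1 - s := by
      have h3 : (p-1-s) + (1+s) = p := by omega
      have h4 := congrArg (Nat.cast : ℕ → ℝ) h3
      push_cast at h4
      linarith
    have h4 : ((q - t : ℕ):ℝ) = (q:ℝ) - t := by
      have h5 : (q-t) + t = q := by omega
      have h6 := congrArg (Nat.cast : ℕ → ℝ) h5
      push_cast at h6
      linarith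
    have h5 : p+q - ((p-1-s)+t) + (p-1-s) = p+q-t := by omega
    simp only [hg, h5]
    rw [Nat.choose_symm hsp]
    have hden : ((p+q : ℕ):ℝ) - (((p-1-s)+t : ℕ):ℝ) = ((q-t : ℕ):ℝ) + 1 + s := by
      push_cast
      rw [h2, h4]
      ring
    rw [hden, epow]
    ring
  rw [Finset.sum_congr rfl claim, ← Finset.mul_sum]
  have hbeta := beta_sum (p-1) (q-t)
  rw [show (p-1)+1 = p from by omega] at hbeta
  rw [hbeta]
  have hfac : (p-1) + (q-t) + 1 = p+q-t := by omega
  rw [hfac]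
  have hcq : (q.choose t : ℝ) * ((q-t)! : ℝ) * (t ! : ℝ) = (q ! : ℝ) := by
    rw_mod_cast [← Nat.choose_mul_factorial_mul_factorial htq]
    ring
  have p1 : (t ! : ℝ) ≠ 0 := by positivity
  have p2 : ((p+q-t)! : ℝ) ≠ 0 := by positivity
  have p3 : ((q-t)! : ℝ) ≠ 0 := by positivity
  field_simp
  linear_combination (a^(p+q-t) * b^t) * hcq

end Aux

/-- For every integer `k ≥ 2`, every `1 ≤ i ≤ k − 1` and all reals `a, b`, the `k`-th
central moment kernel evaluated at `i` copies of `a` followed by `k − i` copies of `b`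
satisfies `ψ_k(a,…,a,b,…,b) = (−1)^{i+1} (a − b)^k / C(k,i)`. -/
theorem stmt3 (k i : ℕ) (hk : 2 ≤ k) (hi1 : 1 ≤ i) (hi2 : i ≤ k - 1) (a b : ℝ) :
    psi k (fun t => if (t : ℕ) < i then a else b)
      = (-1 : ℝ) ^ (i + 1) * (a - b) ^ k / (k.choose i : ℝ) := by
  have hik : i < k := by omega
  set m := k - i with hm
  have hm1 : 1 ≤ m := by omega
  have himk : i + m = k := by omega
  have hmik : m + i = k := by omega
  set x : Fin k → ℝ := fun t => if (t : ℕ) < i then a else b with hx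
  set A : Finset (Fin k) := Finset.univ.filter (fun t : Fin k => (t:ℕ) < i) with hA
  set B : Finset (Fin k) := Finset.univ.filter (fun t : Fin k => ¬ (t:ℕ) < i) with hB
  have hAcard : A.card = i := by
    have hAIio : A = Finset.Iio (⟨i, hik⟩ : Fin k) := by
      ext t
      simp [hA, Fin.lt_def]
    rw [hAIio, Fin.card_Iio]
  have hABcard : A.card + B.card = k := by
    rw [hA, hB, Finset.card_filter_add_card_filter_not]
    simp
  have hBcard : B.card = m := by omega
  have hdisj : Disjoint A B := Finset.disjoint_filter_filter_not Finset.univ Finset.univ _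
  have hxA : ∀ t ∈ A, x t = a := by
    intro t ht
    rw [hA] at ht
    simp only [hx]
    exact if_pos (Finset.mem_filter.mp ht).2
  have hxB : ∀ t ∈ B, x t = b := by
    intro t ht
    rw [hB] at ht
    simp only [hx]
    exact if_neg (Finset.mem_filter.mp ht).2
  have hprod : ∏ t, x t = a^i * b^m := by
    rw [← Finset.prod_filter_mul_prod_filter_not Finset.univ (fun t : Fin k => (t:ℕ) < i) x,
      ← hA, ← hB, Finset.prod_congr rfl hxA, Finset.prod_congr rfl hxB,
      Finset.prod_const, Finset.prod_const, hAcard, hBcard]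
  -- continuing: hD
  have hD : ∀ j : ℕ,
      (∑ i1 : Fin k, ∑ S ∈ Finset.powersetCard j (Finset.univ.erase i1),
          x i1 ^ (k-j) * ∏ t ∈ S, x t)
        = i * (a^(k-j) * ∑ s ∈ Finset.range (j+1),
            ((i-1).choose s : ℝ) * (m.choose (j-s) : ℝ) * a^s * b^(j-s))
          + m * (b^(k-j) * ∑ s ∈ Finset.range (j+1),
            ((m-1).choose s : ℝ) * (i.choose (j-s) : ℝ) * b^s * a^(j-s)) := by
    intro j
    rw [← Finset.sum_filter_add_sum_filter_not Finset.univ (fun t : Fin k => (t:ℕ) < i)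
      (fun i1 => ∑ S ∈ Finset.powersetCard j (Finset.univ.erase i1),
          x i1 ^ (k-j) * ∏ t ∈ S, x t), ← hA, ← hB]
    congr 1
    · -- sum over A
      have hcst : ∀ i1 ∈ A, (∑ S ∈ Finset.powersetCard j (Finset.univ.erase i1),
            x i1 ^ (k-j) * ∏ t ∈ S, x t)
          = a^(k-j) * ∑ s ∈ Finset.range (j+1),
              ((i-1).choose s : ℝ) * (m.choose (j-s) : ℝ) * a^s * b^(j-s) := by
        intro i1 h1
        have hi1lt : (i1 : ℕ) < i := by
          have := h1; rw [hA] at this; exact (Finset.mem_filter.mp this).2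
        have hxi1 : x i1 = a := hxA i1 h1
        have herase : Finset.univ.erase i1 = (A.erase i1) ∪ B := by
          ext t
          simp only [Finset.mem_erase, Finset.mem_union, Finset.mem_filter, Finset.mem_univ,
            true_and, and_true, hA, hB]
          constructor
          · intro ht
            by_cases h : (t:ℕ) < i
            · exact Or.inl ⟨ht, h⟩
            · exact Or.inr h
          · rintro (⟨ht, _⟩ | h)
            · exact ht
            · intro he
              rw [he] at h
              exact h hi1lt
        have hfact : ∀ S ∈ Finset.powersetCard j ((A.erase i1) ∪ B),
            x i1 ^ (k-j) * ∏ t ∈ S, x t = a^(k-j) * ∏ t ∈ S, x t := by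
          intro S _
          rw [hxi1]
        rw [herase, Finset.sum_congr rfl hfact, ← Finset.mul_sum,
          Esum_union B x (A.erase i1) (hdisj.mono_left (Finset.erase_subset _ _)) j]
        congr 1
        refine Finset.sum_congr rfl fun s _ => ?_
        rw [Esum_const (A.erase i1) x a (fun t ht => hxA t (Finset.mem_of_mem_erase ht)) s,
          Esum_const B x b hxB (j-s),
          Finset.card_erase_of_mem h1, hAcard, hBcard]
        ring
      rw [Finset.sum_congr rfl hcst, Finset.sum_const, hAcard, nsmul_eq_mul]
    · -- sum over B
      have hcst : ∀ i1 ∈ B, (∑ S ∈ Finset.powersetCard j (Finset.univ.erase i1),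
            x i1 ^ (k-j) * ∏ t ∈ S, x t)
          = b^(k-j) * ∑ s ∈ Finset.range (j+1),
              ((m-1).choose s : ℝ) * (i.choose (j-s) : ℝ) * b^s * a^(j-s) := by
        intro i1 h1
        have hi1lt : ¬ (i1 : ℕ) < i := by
          have := h1; rw [hB] at this; exact (Finset.mem_filter.mp this).2
        have hxi1 : x i1 = b := hxB i1 h1
        have herase : Finset.univ.erase i1 = (B.erase i1) ∪ A := by
          ext t
          simp only [Finset.mem_erase, Finset.mem_union, Finset.mem_filter, Finset.mem_univ,
            true_and, and_true, hA, hB]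
          constructor
          · intro ht
            by_cases h : (t:ℕ) < i
            · exact Or.inr h
            · exact Or.inl ⟨ht, h⟩
          · rintro (⟨ht, _⟩ | h)
            · exact ht
            · intro he
              rw [he] at h
              exact hi1lt h
        have hfact : ∀ S ∈ Finset.powersetCard j ((B.erase i1) ∪ A),
            x i1 ^ (k-j) * ∏ t ∈ S, x t = b^(k-j) * ∏ t ∈ S, x t := by
          intro S _
          rw [hxi1]
        have hdisj' : Disjoint (B.erase i1) A :=
          (hdisj.symm).mono_left (Finset.erase_subset _ _)
        rw [herase, Finset.sum_congr rfl hfact, ← Finset.mul_sum,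
          Esum_union A x (B.erase i1) hdisj' j]
        congr 1
        refine Finset.sum_congr rfl fun s _ => ?_
        rw [Esum_const (B.erase i1) x b (fun t ht => hxB t (Finset.mem_of_mem_erase ht)) s,
          Esum_const A x a hxA (j-s),
          Finset.card_erase_of_mem h1, hAcard, hBcard]
        ring
      rw [Finset.sum_congr rfl hcst, Finset.sum_const, hBcard, nsmul_eq_mul]
  -- unfold psi and extend the sum to range k
  have hstep : psi k x
      = (∑ j ∈ Finset.range k, (-1:ℝ)^j * (1/((k:ℝ) - j)) *
          (∑ i1 : Fin k, ∑ S ∈ Finset.powersetCard j (Finset.univ.erase i1),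
            x i1 ^ (k-j) * ∏ t ∈ S, x t))
        + (-1:ℝ)^k * (a^i * b^m) := by
    have hk1 : k - 1 + 1 = k := by omega
    have hsplit := Finset.sum_range_succ
      (fun j => (-1:ℝ)^j * (1/((k:ℝ) - j)) *
        (∑ i1 : Fin k, ∑ S ∈ Finset.powersetCard j (Finset.univ.erase i1),
          x i1 ^ (k-j) * ∏ t ∈ S, x t)) (k-1)
    rw [hk1] at hsplit
    rw [hsplit]
    have hterm : (∑ i1 : Fin k, ∑ S ∈ Finset.powersetCard (k-1) (Finset.univ.erase i1),
        x i1 ^ (k-(k-1)) * ∏ t ∈ S, x t) = k * (a^i * b^m) := by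
      have h2 : ∀ i1 : Fin k,
          Finset.powersetCard (k-1) (Finset.univ.erase i1) = {Finset.univ.erase i1} := by
        intro i1
        have h1 : (Finset.univ.erase i1).card = k - 1 := by
          rw [Finset.card_erase_of_mem (Finset.mem_univ i1), Finset.card_univ, Fintype.card_fin]
        rw [← h1, Finset.powersetCard_self]
      have h3 : k - (k-1) = 1 := by omega
      have h4 : ∀ i1 : Fin k, (∑ S ∈ Finset.powersetCard (k-1) (Finset.univ.erase i1),
          x i1 ^ (k-(k-1)) * ∏ t ∈ S, x t) = a^i * b^m := by
        intro i1
        rw [h2 i1, Finset.sum_singleton, h3, pow_one,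
          Finset.mul_prod_erase Finset.univ x (Finset.mem_univ i1), hprod]
      rw [Finset.sum_congr rfl (fun i1 _ => h4 i1), Finset.sum_const, Finset.card_univ,
        Fintype.card_fin, nsmul_eq_mul]
    rw [hterm]
    have hcast : ((k:ℝ) - ((k-1 : ℕ):ℝ)) = 1 := by
      have h5 : (k - 1) + 1 = k := by omega
      have h6 := congrArg (Nat.cast : ℕ → ℝ) h5
      push_cast at h6
      linarith
    rw [hcast]
    have hsign : (-1:ℝ)^k = (-1:ℝ)^(k-1) * (-1:ℝ) := by
      rw [← pow_succ, hk1]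
    simp only [psi, hprod, hsign]
    ring
  rw [hstep]
  -- rewrite the inner sums with hD and distribute
  have hdist : (∑ j ∈ Finset.range k, (-1:ℝ)^j * (1/((k:ℝ) - j)) *
          (∑ i1 : Fin k, ∑ S ∈ Finset.powersetCard j (Finset.univ.erase i1),
            x i1 ^ (k-j) * ∏ t ∈ S, x t))
      = (i:ℝ) * (∑ j ∈ Finset.range k, (-1:ℝ)^j * (1/((k:ℝ) - j)) * a^(k-j) *
          (∑ s ∈ Finset.range (j+1),
            ((i-1).choose s : ℝ) * (m.choose (j-s) : ℝ) * a^s * b^(j-s)))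
        + (m:ℝ) * (∑ j ∈ Finset.range k, (-1:ℝ)^j * (1/((k:ℝ) - j)) * b^(k-j) *
          (∑ s ∈ Finset.range (j+1),
            ((m-1).choose s : ℝ) * (i.choose (j-s) : ℝ) * b^s * a^(j-s))) := by
    rw [Finset.mul_sum, Finset.mul_sum, ← Finset.sum_add_distrib]
    refine Finset.sum_congr rfl fun j _ => ?_
    rw [hD j]
    ring
  rw [hdist]
  have hSA := core i m hi1 a b
  rw [himk] at hSA
  have hSB := core m i hm1 b a
  rw [hmik] at hSB
  rw [hSA, hSB]
  -- the target coefficients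
  open Nat in
  set e : ℕ → ℝ := fun t => (-1:ℝ)^(i+1) * ((-1:ℝ)^t * (k.choose t : ℝ) * a^(k-t) * b^t)
      / (k.choose i : ℝ) with he
  have hCki : (k.choose i : ℝ) ≠ 0 := by
    have := Nat.choose_pos (le_of_lt hik)
    positivity
  have hrhs : (-1:ℝ)^(i+1) * (a-b)^k / (k.choose i : ℝ) = ∑ t ∈ Finset.range (k+1), e t := by
    rw [show a - b = -b + a from by ring, add_pow (-b) a k, Finset.mul_sum, Finset.sum_div]
    refine Finset.sum_congr rfl fun t _ => ?_
    simp only [he]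
    rw [neg_pow]
    ring
  have hf2 : (k.choose i : ℝ) * (Nat.factorial i : ℝ) * (Nat.factorial m : ℝ)
      = (Nat.factorial k : ℝ) := by
    have h := Nat.choose_mul_factorial_mul_factorial (le_of_lt hik)
    rw [← hm] at h
    exact_mod_cast congrArg (Nat.cast : ℕ → ℝ) h
  have hf3 : (i:ℝ) * (Nat.factorial (i-1) : ℝ) = (Nat.factorial i : ℝ) := by
    exact_mod_cast congrArg (Nat.cast : ℕ → ℝ) (Nat.mul_factorial_pred (by omega : i ≠ 0))
  have hf3m : (m:ℝ) * (Nat.factorial (m-1) : ℝ) = (Nat.factorial m : ℝ) := by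
    exact_mod_cast congrArg (Nat.cast : ℕ → ℝ) (Nat.mul_factorial_pred (by omega : m ≠ 0))
  have hA' : (i:ℝ) * (∑ t ∈ Finset.range (m+1),
        (-1:ℝ)^(t+i+1) * (Nat.factorial (i-1) : ℝ) * (Nat.factorial m : ℝ)
          / ((Nat.factorial t : ℝ) * (Nat.factorial (k-t) : ℝ)) * a^(k-t) * b^t)
      = ∑ t ∈ Finset.range (m+1), e t := by
    rw [Finset.mul_sum]
    refine Finset.sum_congr rfl fun t ht => ?_
    have htm : t ≤ m := by
      have := Finset.mem_range.mp ht; omega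
    have htk : t ≤ k := by omega
    have hf1 : (k.choose t : ℝ) * (Nat.factorial t : ℝ) * (Nat.factorial (k-t) : ℝ)
        = (Nat.factorial k : ℝ) := by
      exact_mod_cast congrArg (Nat.cast : ℕ → ℝ) (Nat.choose_mul_factorial_mul_factorial htk)
    have hden : (Nat.factorial t : ℝ) * (Nat.factorial (k-t) : ℝ) ≠ 0 := by positivity
    have echoose : (k.choose t : ℝ) / (k.choose i : ℝ)
        = (i:ℝ) * (Nat.factorial (i-1) : ℝ) * (Nat.factorial m : ℝ)
          / ((Nat.factorial t : ℝ) * (Nat.factorial (k-t) : ℝ)) := by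
      rw [div_eq_div_iff hCki hden]
      linear_combination hf1 - hf2 - ((Nat.factorial m : ℝ) * (k.choose i : ℝ)) * hf3
    have hsign : (-1:ℝ)^(t+i+1) = (-1:ℝ)^t * (-1:ℝ)^(i+1) := by
      rw [show t+i+1 = t+(i+1) from by omega, pow_add]
    calc (i:ℝ) * ((-1:ℝ)^(t+i+1) * (Nat.factorial (i-1) : ℝ) * (Nat.factorial m : ℝ)
          / ((Nat.factorial t : ℝ) * (Nat.factorial (k-t) : ℝ)) * a^(k-t) * b^t)
        = ((-1:ℝ)^t * (-1:ℝ)^(i+1))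
            * ((i:ℝ) * (Nat.factorial (i-1) : ℝ) * (Nat.factorial m : ℝ)
              / ((Nat.factorial t : ℝ) * (Nat.factorial (k-t) : ℝ))) * (a^(k-t) * b^t) := by
          rw [hsign]; ring
      _ = ((-1:ℝ)^t * (-1:ℝ)^(i+1)) * ((k.choose t : ℝ) / (k.choose i : ℝ))
            * (a^(k-t) * b^t) := by rw [echoose]
      _ = e t := by simp only [he]; ring
  have hB' : (m:ℝ) * (∑ t ∈ Finset.range (i+1),
        (-1:ℝ)^(t+m+1) * (Nat.factorial (m-1) : ℝ) * (Nat.factorial i : ℝ)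
          / ((Nat.factorial t : ℝ) * (Nat.factorial (k-t) : ℝ)) * b^(k-t) * a^t)
      = ∑ r ∈ Finset.range (i+1), e (m+r) := by
    rw [Finset.mul_sum, ← Finset.sum_range_reflect (fun t => (m:ℝ) *
      ((-1:ℝ)^(t+m+1) * (Nat.factorial (m-1) : ℝ) * (Nat.factorial i : ℝ)
        / ((Nat.factorial t : ℝ) * (Nat.factorial (k-t) : ℝ)) * b^(k-t) * a^t)) (i+1)]
    refine Finset.sum_congr rfl fun r hr => ?_
    have hri : r ≤ i := by
      have := Finset.mem_range.mp hr; omega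
    have hidx : i + 1 - 1 - r = i - r := by omega
    rw [hidx]
    have hkir : k - (i-r) = m + r := by omega
    have hkmr : k - (m+r) = i - r := by omega
    have hmrk : m + r ≤ k := by omega
    rw [hkir]
    have hf1 : (k.choose (m+r) : ℝ) * (Nat.factorial (m+r) : ℝ) * (Nat.factorial (i-r) : ℝ)
        = (Nat.factorial k : ℝ) := by
      have h := Nat.choose_mul_factorial_mul_factorial hmrk
      rw [hkmr] at h
      exact_mod_cast congrArg (Nat.cast : ℕ → ℝ) h
    have hden : (Nat.factorial (i-r) : ℝ) * (Nat.factorial (m+r) : ℝ) ≠ 0 := by positivity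
    have echoose : (k.choose (m+r) : ℝ) / (k.choose i : ℝ)
        = (m:ℝ) * (Nat.factorial (m-1) : ℝ) * (Nat.factorial i : ℝ)
          / ((Nat.factorial (i-r) : ℝ) * (Nat.factorial (m+r) : ℝ)) := by
      rw [div_eq_div_iff hCki hden]
      linear_combination hf1 - hf2 - ((Nat.factorial i : ℝ) * (k.choose i : ℝ)) * hf3m
    have hsign : (-1:ℝ)^((i-r)+m+1) = (-1:ℝ)^(m+r) * (-1:ℝ)^(i+1) := by
      rw [← pow_add (-1:ℝ) (m+r) (i+1), neg_one_pow_eq_pow_mod_two,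
        neg_one_pow_eq_pow_mod_two (n := m+r+(i+1))]
      congr 1
      omega
    calc (m:ℝ) * ((-1:ℝ)^((i-r)+m+1) * (Nat.factorial (m-1) : ℝ) * (Nat.factorial i : ℝ)
          / ((Nat.factorial (i-r) : ℝ) * (Nat.factorial (m+r) : ℝ)) * b^(m+r) * a^(i-r))
        = ((-1:ℝ)^(m+r) * (-1:ℝ)^(i+1))
            * ((m:ℝ) * (Nat.factorial (m-1) : ℝ) * (Nat.factorial i : ℝ)
              / ((Nat.factorial (i-r) : ℝ) * (Nat.factorial (m+r) : ℝ))) * (a^(i-r) * b^(m+r)) := by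
          rw [hsign]; ring
      _ = ((-1:ℝ)^(m+r) * (-1:ℝ)^(i+1)) * ((k.choose (m+r) : ℝ) / (k.choose i : ℝ))
            * (a^(i-r) * b^(m+r)) := by rw [echoose]
      _ = e (m+r) := by simp only [he]; rw [hkmr]; ring
  rw [hA', hB', hrhs]
  have hsplit2 : ∑ t ∈ Finset.range (k+1), e t
      = (∑ t ∈ Finset.range (m+1), e t) + (∑ r ∈ Finset.range (i+1), e (m+r)) - e m := by
    have h1 : ∑ t ∈ Finset.range (k+1), e t
        = (∑ t ∈ Finset.range (m+1), e t) + ∑ t ∈ Finset.Ico (m+1) (k+1), e t := by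
      rw [Finset.range_eq_Ico,
        ← Finset.sum_Ico_consecutive e (by omega : 0 ≤ m+1) (by omega : m+1 ≤ k+1),
        ← Finset.range_eq_Ico]
    have h2 : ∑ t ∈ Finset.Ico m (k+1), e t = e m + ∑ t ∈ Finset.Ico (m+1) (k+1), e t :=
      Finset.sum_eq_sum_Ico_succ_bot (by omega) e
    have h3 : ∑ t ∈ Finset.Ico m (k+1), e t = ∑ r ∈ Finset.range (i+1), e (m+r) := by
      rw [Finset.sum_Ico_eq_sum_range, show k+1-m = i+1 from by omega]
    linarith
  have hem : e m = (-1:ℝ)^(k+1) * (a^i * b^m) := by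
    have hsymm : k.choose m = k.choose i := by
      rw [hm]
      exact Nat.choose_symm (le_of_lt hik)
    have hkm : k - m = i := by omega
    have hsign : (-1:ℝ)^(i+1) * (-1:ℝ)^m = (-1:ℝ)^(k+1) := by
      rw [← pow_add, neg_one_pow_eq_pow_mod_two, neg_one_pow_eq_pow_mod_two (n := k+1)]
      congr 1
      omega
    simp only [he]
    rw [hkm, hsymm]
    field_simp
    linear_combination (a^i * b^m) * hsign
  have hps : (-1:ℝ)^(k+1) = -((-1:ℝ)^k) := by
    rw [pow_succ]; ring
  have hcancel : e m + (-1:ℝ)^k * (a^i * b^m) = 0 := by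
    rw [hem, hps]; ring
  linarith [hsplit2, hcancel]
end

section
/- For all real numbers x₁ ≤ x₂ ≤ x₃, the quantity D(x₁,x₂,x₃) = −x₁²/2 − x₁x₂ + 2x₁x₃ + x₂² − x₂x₃ − x₃²/2 (which equals the partial derivative ∂ψ₃/∂x₂ of the third central moment kernel) satisfies −(3/4)(x₁ − x₃)² ≤ D(x₁,x₂,x₃) ≤ −(1/2)(x₁ − x₃)² ≤ 0. -/
/-- The third central moment kernel (Heffernan 1997):
`ψ₃(x₁,x₂,x₃) = (1/3)(x₁³+x₂³+x₃³) − (1/2)Σ_{i≠j} x_i² x_j + 2x₁x₂x₃`. -/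
noncomputable def psi3 (x1 x2 x3 : ℝ) : ℝ :=
  (1 / 3) * (x1 ^ 3 + x2 ^ 3 + x3 ^ 3)
    - (1 / 2) * (x1 ^ 2 * x2 + x1 ^ 2 * x3 + x2 ^ 2 * x1 + x2 ^ 2 * x3
        + x3 ^ 2 * x1 + x3 ^ 2 * x2)
    + 2 * x1 * x2 * x3

/-- For all `x₁ ≤ x₂ ≤ x₃`, the quantity
`D(x₁,x₂,x₃) = −x₁²/2 − x₁x₂ + 2x₁x₃ + x₂² − x₂x₃ − x₃²/2`, which equals the partial
derivative `∂ψ₃/∂x₂` of the third central moment kernel, satisfies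
`−(3/4)(x₁−x₃)² ≤ D ≤ −(1/2)(x₁−x₃)² ≤ 0`. -/
theorem stmt5 (x1 x2 x3 : ℝ) (h12 : x1 ≤ x2) (h23 : x2 ≤ x3) :
    HasDerivAt (fun t : ℝ => psi3 x1 t x3)
      (-x1 ^ 2 / 2 - x1 * x2 + 2 * x1 * x3 + x2 ^ 2 - x2 * x3 - x3 ^ 2 / 2) x2
    ∧ -(3 / 4) * (x1 - x3) ^ 2
        ≤ -x1 ^ 2 / 2 - x1 * x2 + 2 * x1 * x3 + x2 ^ 2 - x2 * x3 - x3 ^ 2 / 2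
    ∧ -x1 ^ 2 / 2 - x1 * x2 + 2 * x1 * x3 + x2 ^ 2 - x2 * x3 - x3 ^ 2 / 2
        ≤ -(1 / 2) * (x1 - x3) ^ 2
    ∧ -(1 / 2) * (x1 - x3) ^ 2 ≤ 0 := by
  refine ⟨?_, ?_, ?_, ?_⟩
  · have h : HasDerivAt (fun t : ℝ => psi3 x1 t x3)
        ((1 / 3) * (3 * x2 ^ 2)
          - (1 / 2) * (x1 ^ 2 + 2 * x2 * x1 + 2 * x2 * x3 + x3 ^ 2)
          + 2 * x1 * x3) x2 := by
      unfold psi3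
      apply HasDerivAt.add
      apply HasDerivAt.sub
      · exact ((((hasDerivAt_pow 3 x2).const_add (x1 ^ 3)).add_const (x3 ^ 3)).const_mul _).congr_deriv (by norm_num)
      · have h1 : HasDerivAt (fun t : ℝ => x1 ^ 2 * t + x1 ^ 2 * x3 + t ^ 2 * x1
            + t ^ 2 * x3 + x3 ^ 2 * x1 + x3 ^ 2 * t)
            (x1 ^ 2 + 2 * x2 * x1 + 2 * x2 * x3 + x3 ^ 2) x2 := by
          have := ((((((hasDerivAt_id x2).const_mul (x1 ^ 2)).add_const (x1 ^ 2 * x3)).add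
            ((hasDerivAt_pow 2 x2).mul_const x1)).add
            ((hasDerivAt_pow 2 x2).mul_const x3)).add_const (x3 ^ 2 * x1)).add
            ((hasDerivAt_id x2).const_mul (x3 ^ 2))
          exact this.congr_deriv (by ring)
        exact h1.const_mul _
      · exact ((hasDerivAt_id x2).const_mul (2 * x1)).mul_const x3 |>.congr_deriv (by ring)
    exact h.congr_deriv (by ring)
  · nlinarith [sq_nonneg (x2 - (x1 + x3) / 2)]
  · nlinarith [mul_nonneg (sub_nonneg.2 h12) (sub_nonneg.2 h23)]
  · nlinarith [sq_nonneg (x1 - x3)]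
end

section
/- Let X₁, X₂, X₃ be independent, identically distributed real random variables with E|X₁|³ < ∞. Then E[ψ₃(X₁, X₂, X₃)] = E[(X₁ − E X₁)³], i.e. ψ₃ is an unbiased kernel for the third central moment. -/
open MeasureTheory ProbabilityTheory

/-- Let `X₁, X₂, X₃` be i.i.d. real random variables with `E|X₁|³ < ∞`. Then
`E[ψ₃(X₁,X₂,X₃)] = E[(X₁ − EX₁)³]`: `ψ₃` is an unbiased kernel for the third central
moment. -/
theorem stmt6 {Ω : Type*} [MeasureSpace Ω] [IsProbabilityMeasure (ℙ : Measure Ω)]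
    (X : Fin 3 → Ω → ℝ) (hmeas : ∀ i, Measurable (X i))
    (hindep : iIndepFun X (ℙ : Measure Ω))
    (hid : ∀ i, IdentDistrib (X i) (X 0) (ℙ : Measure Ω) (ℙ : Measure Ω))
    (hmom : MemLp (X 0) 3 (ℙ : Measure Ω)) :
    ∫ ω, psi3 (X 0 ω) (X 1 ω) (X 2 ω) ∂(ℙ : Measure Ω)
      = ∫ ω, (X 0 ω - ∫ ω', X 0 ω' ∂(ℙ : Measure Ω)) ^ 3 ∂(ℙ : Measure Ω) := by
  set μ : Measure Ω := ℙ
  have hmom' : ∀ i, MemLp (X i) 3 μ := fun i => (hid i).symm.memLp_snd hmom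
  have hint1 : ∀ i, Integrable (X i) μ := fun i =>
    ((hmom' i).mono_exponent (by norm_num)).integrable le_rfl
  have hint2 : ∀ i, Integrable (fun ω => X i ω ^ 2) μ := fun i =>
    ((hmom' i).mono_exponent (by norm_num)).integrable_sq
  have hint3 : ∀ i, Integrable (fun ω => X i ω ^ 3) μ := by
    intro i
    have h := (hmom' i).integrable_norm_rpow (by norm_num) (by norm_num)
    refine h.mono' ((hmeas i).pow_const 3).aestronglyMeasurable ?_
    filter_upwards with ω
    have h3 : ((3 : ENNReal).toReal) = ((3 : ℕ) : ℝ) := by norm_num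
    rw [h3, Real.rpow_natCast, Real.norm_eq_abs, Real.norm_eq_abs, abs_pow]
  set m1 := ∫ ω, X 0 ω ∂μ with hm1
  set m2 := ∫ ω, X 0 ω ^ 2 ∂μ with hm2
  set m3 := ∫ ω, X 0 ω ^ 3 ∂μ with hm3
  have hmo1 : ∀ i, ∫ ω, X i ω ∂μ = m1 := fun i => (hid i).integral_eq
  have hmo2 : ∀ i, ∫ ω, X i ω ^ 2 ∂μ = m2 := fun i =>
    ((hid i).comp (measurable_id.pow_const 2)).integral_eq
  have hmo3 : ∀ i, ∫ ω, X i ω ^ 3 ∂μ = m3 := fun i =>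
    ((hid i).comp (measurable_id.pow_const 3)).integral_eq
  have hcross : ∀ i j : Fin 3, i ≠ j → ∫ ω, X i ω ^ 2 * X j ω ∂μ = m2 * m1 := by
    intro i j hij
    have h : IndepFun (fun ω => X i ω ^ 2) (X j) μ :=
      (hindep.indepFun hij).comp (measurable_id.pow_const 2) measurable_id
    have he : (fun ω => X i ω ^ 2 * X j ω) = (fun ω => X i ω ^ 2) * X j := rfl
    rw [he, h.integral_mul_eq_mul_integral (hint2 i).aestronglyMeasurable (hint1 j).aestronglyMeasurable, hmo2, hmo1]
  have hcrossInt : ∀ i j : Fin 3, i ≠ j → Integrable (fun ω => X i ω ^ 2 * X j ω) μ := by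
    intro i j hij
    have h : IndepFun (fun ω => X i ω ^ 2) (X j) μ :=
      (hindep.indepFun hij).comp (measurable_id.pow_const 2) measurable_id
    exact h.integrable_mul (hint2 i) (hint1 j)
  have h12 : IndepFun (X 1) (X 2) μ := hindep.indepFun (by decide)
  have hint12 : Integrable (X 1 * X 2) μ := h12.integrable_mul (hint1 1) (hint1 2)
  have h012 : IndepFun (X 0) (X 1 * X 2) μ :=
    hindep.indepFun_mul_right hmeas 0 1 2 (by decide) (by decide)
  have htriple : ∫ ω, X 0 ω * X 1 ω * X 2 ω ∂μ = m1 * (m1 * m1) := by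
    have h1 := h012.integral_mul_eq_mul_integral (hint1 0).aestronglyMeasurable hint12.aestronglyMeasurable
    have h2 := h12.integral_mul_eq_mul_integral (hint1 1).aestronglyMeasurable (hint1 2).aestronglyMeasurable
    have he : (fun ω => X 0 ω * X 1 ω * X 2 ω) = X 0 * (X 1 * X 2) := by
      funext ω; simp [mul_assoc]
    rw [he, h1]
    have he2 : (X 1 * X 2 : Ω → ℝ) = fun ω => X 1 ω * X 2 ω := rfl
    rw [he2] at h2 ⊢
    rw [h2]
    rw [show (∫ ω, X 0 ω ∂μ) = m1 from hmo1 0, hmo1 1, hmo1 2]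
  have htripleInt : Integrable (fun ω => X 0 ω * X 1 ω * X 2 ω) μ := by
    have h := h012.integrable_mul (hint1 0) hint12
    have he : (fun ω => X 0 ω * X 1 ω * X 2 ω) = X 0 * (X 1 * X 2) := by
      funext ω; simp [mul_assoc]
    rw [he]; exact h
  -- LHS
  have hS1 : Integrable (fun ω => X 0 ω ^ 3 + X 1 ω ^ 3 + X 2 ω ^ 3) μ :=
    ((hint3 0).add (hint3 1)).add (hint3 2)
  have hS2 : Integrable (fun ω => X 0 ω ^ 2 * X 1 ω + X 0 ω ^ 2 * X 2 ω + X 1 ω ^ 2 * X 0 ω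
      + X 1 ω ^ 2 * X 2 ω + X 2 ω ^ 2 * X 0 ω + X 2 ω ^ 2 * X 1 ω) μ :=
    (((((hcrossInt 0 1 (by decide)).add (hcrossInt 0 2 (by decide))).add
      (hcrossInt 1 0 (by decide))).add (hcrossInt 1 2 (by decide))).add
      (hcrossInt 2 0 (by decide))).add (hcrossInt 2 1 (by decide))
  have hLHS : ∫ ω, psi3 (X 0 ω) (X 1 ω) (X 2 ω) ∂μ = m3 - 3 * (m2 * m1) + 2 * (m1 * (m1 * m1)) := by
    have hrw : ∀ ω, psi3 (X 0 ω) (X 1 ω) (X 2 ω) =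
        (1 / 3) * (X 0 ω ^ 3 + X 1 ω ^ 3 + X 2 ω ^ 3)
        - (1 / 2) * (X 0 ω ^ 2 * X 1 ω + X 0 ω ^ 2 * X 2 ω + X 1 ω ^ 2 * X 0 ω
          + X 1 ω ^ 2 * X 2 ω + X 2 ω ^ 2 * X 0 ω + X 2 ω ^ 2 * X 1 ω)
        + 2 * (X 0 ω * X 1 ω * X 2 ω) := by
      intro ω; unfold psi3; ring
    rw [integral_congr_ae (Filter.Eventually.of_forall hrw)]
    have hA : Integrable (fun ω => (1 / 3 : ℝ) * (X 0 ω ^ 3 + X 1 ω ^ 3 + X 2 ω ^ 3)) μ :=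
      hS1.const_mul _
    have hB : Integrable (fun ω => (1 / 2 : ℝ) * (X 0 ω ^ 2 * X 1 ω + X 0 ω ^ 2 * X 2 ω
        + X 1 ω ^ 2 * X 0 ω + X 1 ω ^ 2 * X 2 ω + X 2 ω ^ 2 * X 0 ω + X 2 ω ^ 2 * X 1 ω)) μ :=
      hS2.const_mul _
    have hAB : Integrable (fun ω => (1 / 3 : ℝ) * (X 0 ω ^ 3 + X 1 ω ^ 3 + X 2 ω ^ 3)
        - (1 / 2 : ℝ) * (X 0 ω ^ 2 * X 1 ω + X 0 ω ^ 2 * X 2 ω + X 1 ω ^ 2 * X 0 ω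
          + X 1 ω ^ 2 * X 2 ω + X 2 ω ^ 2 * X 0 ω + X 2 ω ^ 2 * X 1 ω)) μ := hA.sub hB
    have hC : Integrable (fun ω => (2 : ℝ) * (X 0 ω * X 1 ω * X 2 ω)) μ :=
      htripleInt.const_mul 2
    have hi01 : Integrable (fun ω => X 0 ω ^ 3 + X 1 ω ^ 3) μ := (hint3 0).add (hint3 1)
    have hc1 : Integrable (fun ω => X 0 ω ^ 2 * X 1 ω + X 0 ω ^ 2 * X 2 ω) μ :=
      (hcrossInt 0 1 (by decide)).add (hcrossInt 0 2 (by decide))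
    have hc2 : Integrable (fun ω => X 0 ω ^ 2 * X 1 ω + X 0 ω ^ 2 * X 2 ω
        + X 1 ω ^ 2 * X 0 ω) μ := hc1.add (hcrossInt 1 0 (by decide))
    have hc3 : Integrable (fun ω => X 0 ω ^ 2 * X 1 ω + X 0 ω ^ 2 * X 2 ω
        + X 1 ω ^ 2 * X 0 ω + X 1 ω ^ 2 * X 2 ω) μ := hc2.add (hcrossInt 1 2 (by decide))
    have hc4 : Integrable (fun ω => X 0 ω ^ 2 * X 1 ω + X 0 ω ^ 2 * X 2 ω
        + X 1 ω ^ 2 * X 0 ω + X 1 ω ^ 2 * X 2 ω + X 2 ω ^ 2 * X 0 ω) μ :=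
      hc3.add (hcrossInt 2 0 (by decide))
    rw [integral_add hAB hC, integral_sub hA hB, integral_const_mul, integral_const_mul,
      integral_const_mul, integral_add hi01 (hint3 2), integral_add (hint3 0) (hint3 1),
      integral_add hc4 (hcrossInt 2 1 (by decide)), integral_add hc3 (hcrossInt 2 0 (by decide)),
      integral_add hc2 (hcrossInt 1 2 (by decide)), integral_add hc1 (hcrossInt 1 0 (by decide)),
      integral_add (hcrossInt 0 1 (by decide)) (hcrossInt 0 2 (by decide))]
    rw [hmo3 0, hmo3 1, hmo3 2, hcross 0 1 (by decide), hcross 0 2 (by decide),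
      hcross 1 0 (by decide), hcross 1 2 (by decide), hcross 2 0 (by decide),
      hcross 2 1 (by decide), htriple]
    ring
  -- RHS
  have hRHS : ∫ ω, (X 0 ω - m1) ^ 3 ∂μ = m3 - 3 * (m2 * m1) + 2 * (m1 * (m1 * m1)) := by
    have hrw : ∀ ω, (X 0 ω - m1) ^ 3 =
        X 0 ω ^ 3 - 3 * m1 * X 0 ω ^ 2 + 3 * m1 ^ 2 * X 0 ω - m1 ^ 3 := by
      intro ω; ring
    rw [integral_congr_ae (Filter.Eventually.of_forall hrw)]
    have hA : Integrable (fun ω => 3 * m1 * X 0 ω ^ 2) μ := (hint2 0).const_mul _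
    have hB : Integrable (fun ω => 3 * m1 ^ 2 * X 0 ω) μ := (hint1 0).const_mul _
    have hAB : Integrable (fun ω => X 0 ω ^ 3 - 3 * m1 * X 0 ω ^ 2) μ := (hint3 0).sub hA
    have hABC : Integrable (fun ω => X 0 ω ^ 3 - 3 * m1 * X 0 ω ^ 2 + 3 * m1 ^ 2 * X 0 ω) μ :=
      hAB.add hB
    rw [integral_sub hABC (integrable_const _), integral_add hAB hB, integral_sub (hint3 0) hA,
      integral_const_mul, integral_const_mul, integral_const]
    rw [hmo2 0, hmo1 0]
    simp only [measure_univ, probReal_univ, ENNReal.toReal_one, smul_eq_mul, one_mul]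
    ring
  rw [hLHS, ← hRHS]
end

section
/- For all integers k ≥ 2 and 0 ≤ i ≤ k − 1, the following summation identity holds: Σ_{g=i+1}^{k−1} (−1)^{g+1} · (k − i)/(k − g + 1) · C(k − i − 1, g − i − 1) = (−1)^{k+1} + (k − i)(−1)^k, where C(·,·) denotes the binomial coefficient and an empty sum equals 0. -/
open Finset

lemma key (n j : ℕ) (hj : j < n) :
    ((n : ℝ)+1)/((n:ℝ)+1-j) * (n.choose j) = ((n+1).choose j : ℝ) := by
  have h := Nat.choose_mul_succ_eq n j
  have hj' : (j:ℝ) ≤ n := by exact_mod_cast hj.le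
  have hne : (n:ℝ)+1-j ≠ 0 := by linarith
  have hcast : ((n+1).choose j : ℝ) * ((n:ℝ)+1-j) = (n.choose j : ℝ) * ((n:ℝ)+1) := by
    rw [show (n:ℝ)+1-j = ((n+1-j:ℕ):ℝ) by rw [Nat.cast_sub (by omega : j ≤ n+1)]; push_cast; ring]
    rw [show (n:ℝ)+1 = ((n+1:ℕ):ℝ) by push_cast; ring]
    exact_mod_cast h.symm
  field_simp
  linarith [hcast]

lemma auxsum (n : ℕ) :
    ∑ j ∈ Finset.range n, (-1:ℝ)^j * (((n:ℝ)+1)/((n:ℝ)+1-j)) * (n.choose j)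
      = (-1:ℝ)^(n+1)*((n:ℝ)+1) + (-1:ℝ)^n := by
  have h1 : ∀ j ∈ Finset.range n, (-1:ℝ)^j * (((n:ℝ)+1)/((n:ℝ)+1-j)) * (n.choose j)
      = (-1:ℝ)^j * ((n+1).choose j : ℝ) := by
    intro j hj
    rw [mul_assoc, key n j (mem_range.mp hj)]
  rw [Finset.sum_congr rfl h1]
  have h0 : ∑ j ∈ Finset.range (n+2), (-1:ℝ)^j * ((n+1).choose j : ℝ) = 0 := by
    have := Int.alternating_sum_range_choose_of_ne (n := n+1) (by omega)
    exact_mod_cast congrArg (Int.cast : ℤ → ℝ) this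
  rw [Finset.sum_range_succ, Finset.sum_range_succ] at h0
  simp only [Nat.choose_succ_self_right, Nat.choose_self] at h0
  push_cast at h0 ⊢
  linear_combination h0




/-- For all integers `k ≥ 2` and `0 ≤ i ≤ k − 1`,
`Σ_{g=i+1}^{k−1} (−1)^{g+1} (k−i)/(k−g+1) C(k−i−1, g−i−1) = (−1)^{k+1} + (k−i)(−1)^k`
(an empty sum equals 0). -/
theorem stmt8 (k i : ℕ) (hk : 2 ≤ k) (hi : i ≤ k - 1) :
    ∑ g ∈ Finset.Icc (i + 1) (k - 1),
        (-1 : ℝ) ^ (g + 1) * (((k : ℝ) - i) / ((k : ℝ) - g + 1))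
          * ((k - i - 1).choose (g - i - 1) : ℝ)
      = (-1 : ℝ) ^ (k + 1) + ((k : ℝ) - i) * (-1 : ℝ) ^ k := by
  obtain ⟨n, rfl⟩ : ∃ n, k = n + i + 1 := ⟨k - i - 1, by omega⟩
  rw [show n + i + 1 - 1 = n + i by omega,
    show Finset.Icc (i+1) (n+i) = Finset.Ico (i+1) (n+i+1) by
      rw [Finset.Ico_add_one_right_eq_Icc],
    Finset.sum_Ico_eq_sum_range, show n + i + 1 - (i + 1) = n by omega]
  have hterm : ∀ j ∈ Finset.range n,
      (-1 : ℝ) ^ (i + 1 + j + 1) * (((n+i+1 : ℕ) : ℝ) - i) / (((n+i+1 : ℕ) : ℝ) - ((i+1+j : ℕ) : ℝ) + 1)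
          * ((n + i + 1 - i - 1).choose (i + 1 + j - i - 1) : ℝ)
        = (-1 : ℝ) ^ i * ((-1:ℝ)^j * (((n:ℝ)+1)/((n:ℝ)+1-j)) * (n.choose j)) := by
    intro j hj
    have hc : (n + i + 1 - i - 1).choose (i + 1 + j - i - 1) = n.choose j := by
      congr 1 <;> omega
    rw [hc]
    push_cast
    ring
  calc ∑ j ∈ Finset.range n,
      (-1 : ℝ) ^ (i + 1 + j + 1) * ((((n+i+1 : ℕ) : ℝ) - i) / (((n+i+1 : ℕ) : ℝ) - ((i+1+j : ℕ) : ℝ) + 1))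
          * ((n + i + 1 - i - 1).choose (i + 1 + j - i - 1) : ℝ)
      = (-1:ℝ)^i * ∑ j ∈ Finset.range n,
          (-1:ℝ)^j * (((n:ℝ)+1)/((n:ℝ)+1-j)) * (n.choose j) := by
        rw [Finset.mul_sum]
        refine Finset.sum_congr rfl fun j hj => ?_
        rw [← hterm j hj]; ring
    _ = (-1 : ℝ) ^ (n+i+1 + 1) + (((n+i+1 : ℕ) : ℝ) - i) * (-1 : ℝ) ^ (n+i+1) := by
        rw [auxsum]; push_cast; ring
end

section
/- For all integers k ≥ 2 and 1 ≤ i ≤ k − 1, the following summation identity holds: Σ_{g=k−i+1}^{k−1} (−1)^{g+1} · i/(k − g + 1) · C(i − 1, g − k + i − 1) = (−1)^k (i − 1), where C(·,·) denotes the binomial coefficient and an empty sum equals 0. -/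
lemma absorb (m j : ℕ) : (m + 2) * (m + 1).choose j = (m + 2).choose j * (m + 2 - j) := by
  rw [← Nat.choose_succ_right_eq]
  exact Nat.add_one_mul_choose_eq (m + 1) j

lemma altsum (m : ℕ) :
    ∑ j ∈ Finset.range (m + 1), (-1 : ℝ) ^ j * ((m + 2).choose j : ℝ)
      = (-1 : ℝ) ^ m * (m + 1) := by
  have h := Int.alternating_sum_range_choose (n := m + 2)
  rw [if_neg (by omega)] at h
  rw [show m + 2 + 1 = (m + 1) + 1 + 1 by ring, Finset.sum_range_succ,
    Finset.sum_range_succ] at h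
  have hz : (∑ j ∈ Finset.range (m + 1), (-1 : ℤ) ^ j * ((m + 2).choose j) : ℤ)
      = - ((-1) ^ (m + 1) * ((m + 2).choose (m + 1) : ℤ))
          - (-1) ^ (m + 2) * ((m + 2).choose (m + 2) : ℤ) := by linarith
  have h' := congrArg (Int.cast : ℤ → ℝ) hz
  push_cast at h'
  rw [h', Nat.choose_succ_self_right, Nat.choose_self]
  push_cast
  ring

/-- For all integers `k ≥ 2` and `1 ≤ i ≤ k − 1`,
`Σ_{g=k−i+1}^{k−1} (−1)^{g+1} i/(k−g+1) C(i−1, g−k+i−1) = (−1)^k (i−1)`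
(an empty sum equals 0). -/
theorem stmt9 (k i : ℕ) (hk : 2 ≤ k) (hi1 : 1 ≤ i) (hi2 : i ≤ k - 1) :
    ∑ g ∈ Finset.Icc (k - i + 1) (k - 1),
        (-1 : ℝ) ^ (g + 1) * ((i : ℝ) / ((k : ℝ) - g + 1))
          * ((i - 1).choose (g + i - k - 1) : ℝ)
      = (-1 : ℝ) ^ k * ((i : ℝ) - 1) := by
  rcases eq_or_lt_of_le hi1 with h1 | h1
  · -- i = 1 : empty sum
    have hi : i = 1 := h1.symm
    subst hi
    rw [show k - 1 + 1 = k by omega, Finset.Icc_eq_empty (by omega)]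
    simp
  · -- i ≥ 2
    obtain ⟨m, rfl⟩ : ∃ m, i = m + 2 := ⟨i - 2, by omega⟩
    obtain ⟨d, rfl⟩ : ∃ d, k = m + 3 + d := ⟨k - (m + 3), by omega⟩
    rw [show m + 3 + d - (m + 2) + 1 = d + 2 by omega,
        show m + 3 + d - 1 = m + d + 2 by omega,
        show Finset.Icc (d + 2) (m + d + 2)
            = Finset.map (addLeftEmbedding (d + 2)) (Finset.range (m + 1)) by
          ext x
          simp only [Finset.mem_Icc, Finset.mem_map, Finset.mem_range, addLeftEmbedding_apply]
          constructor
          · intro hx; exact ⟨x - (d + 2), by omega, by omega⟩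
          · rintro ⟨a, ha, rfl⟩; omega,
        Finset.sum_map]
    simp only [addLeftEmbedding_apply]
    have key : ∀ j ∈ Finset.range (m + 1),
        (-1 : ℝ) ^ (d + 2 + j + 1)
            * (((m + 2 : ℕ) : ℝ) / (((m + 3 + d : ℕ) : ℝ) - ((d + 2 + j : ℕ) : ℝ) + 1))
            * (((m + 2 - 1).choose ((d + 2 + j) + (m + 2) - (m + 3 + d) - 1)) : ℝ)
          = (-1 : ℝ) ^ (d + 1) * ((-1 : ℝ) ^ j * ((m + 2).choose j : ℝ)) := by
      intro j hj
      simp only [Finset.mem_range] at hj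
      rw [show (d + 2 + j) + (m + 2) - (m + 3 + d) - 1 = j by omega,
          show m + 2 - 1 = m + 1 by omega]
      have hden : ((m + 3 + d : ℕ) : ℝ) - ((d + 2 + j : ℕ) : ℝ) + 1 = ((m + 2 - j : ℕ) : ℝ) := by
        push_cast
        have : (j : ℝ) ≤ (m : ℝ) := by exact_mod_cast Nat.lt_succ_iff.mp hj
        rw [Nat.cast_sub (by omega)]
        push_cast; ring
      rw [hden]
      have hne : ((m + 2 - j : ℕ) : ℝ) ≠ 0 := by
        have : 0 < m + 2 - j := by omega
        positivity
      have habs : ((m + 2 : ℕ) : ℝ) * ((m + 1).choose j : ℝ)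
          = ((m + 2).choose j : ℝ) * ((m + 2 - j : ℕ) : ℝ) := by
        exact_mod_cast congrArg (Nat.cast : ℕ → ℝ) (absorb m j)
      have hfrac : ((m + 2 : ℕ) : ℝ) / ((m + 2 - j : ℕ) : ℝ) * ((m + 1).choose j : ℝ)
          = ((m + 2).choose j : ℝ) := by
        field_simp
        push_cast [Nat.cast_sub (show j ≤ m + 2 by omega)] at habs ⊢
        linarith
      rw [mul_assoc, hfrac]
      rw [show d + 2 + j + 1 = (d + 1) + j + 2 by ring]
      rw [pow_add, pow_add]
      ring
    rw [Finset.sum_congr rfl key, ← Finset.mul_sum, altsum]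
    rw [show m + 3 + d = (d + 1) + m + 2 by ring]
    push_cast
    rw [pow_add, pow_add]
    ring
end

section
/- For all integers k ≥ 2, i ≥ 1, j ≥ 0 with i + j < k, the following summation identity holds: Σ_{g=j+1}^{i+j} (−1)^{g+1} · (1/(k − g + 1)) · i · C(i − 1, g − j − 1) · C(k − i, j) = (−1)^{i+j+1} · i! · (k − i)! / ((k − j)! · j!); equivalently, the left-hand side equals C(k, i)^{−1} (−1)^{1+i} C(k, j) (−1)^{j}. -/
open Finset

private lemma aux_sum_inv_sub (n : ℕ) : ∀ (x : ℝ), (∀ m ≤ n, x - m ≠ 0) →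
    ∑ m ∈ range (n + 1), (-1 : ℝ) ^ m * (n.choose m : ℝ) / (x - m)
      = (-1 : ℝ) ^ n * (n.factorial : ℝ) / ∏ m ∈ range (n + 1), (x - m) := by
  induction n with
  | zero => intro x hx; simp
  | succ n ih =>
    intro x hx
    have hx0 : ∀ m ≤ n, x - m ≠ 0 := fun m hm => hx m (by omega)
    have hx1 : ∀ m ≤ n, (x - 1) - m ≠ 0 := by
      intro m hm
      have := hx (m + 1) (by omega)
      push_cast at this ⊢
      intro h; apply this; linarith
    have step : ∑ m ∈ range (n + 2), (-1 : ℝ) ^ m * ((n+1).choose m : ℝ) / (x - m)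
        = (∑ m ∈ range (n + 1), (-1 : ℝ) ^ m * (n.choose m : ℝ) / (x - m))
          - ∑ m ∈ range (n + 1), (-1 : ℝ) ^ m * (n.choose m : ℝ) / ((x - 1) - m) := by
      rw [Finset.sum_range_succ' (fun m => (-1 : ℝ) ^ m * ((n+1).choose m : ℝ) / (x - m)) (n+1)]
      have expand : ∀ m ∈ range (n + 1),
          (-1 : ℝ) ^ (m+1) * ((n+1).choose (m+1) : ℝ) / (x - (m+1 : ℕ))
          = (-1 : ℝ) ^ (m+1) * ((n).choose (m+1) : ℝ) / (x - (m+1 : ℕ))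
            - (-1 : ℝ) ^ m * ((n).choose m : ℝ) / ((x - 1) - m) := by
        intro m hm
        rw [Nat.choose_succ_succ]
        push_cast
        have hne : x - 1 - (m : ℝ) ≠ 0 := hx1 m (by simpa using Nat.lt_succ_iff.mp (mem_range.mp hm))
        have : x - ((m : ℝ) + 1) = x - 1 - m := by ring
        rw [this]
        field_simp
        ring
      rw [Finset.sum_congr rfl expand, Finset.sum_sub_distrib]
      have haux : ∑ m ∈ range (n + 1), (-1 : ℝ) ^ (m+1) * ((n).choose (m+1) : ℝ) / (x - (m+1 : ℕ))
            + (-1 : ℝ) ^ 0 * ((n+1).choose 0 : ℝ) / (x - (0 : ℕ))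
          = ∑ m ∈ range (n + 2), (-1 : ℝ) ^ m * (n.choose m : ℝ) / (x - m) := by
        rw [Finset.sum_range_succ' (fun m => (-1 : ℝ) ^ m * (n.choose m : ℝ) / (x - m)) (n+1)]
        simp
      have h2 : ∑ m ∈ range (n + 2), (-1 : ℝ) ^ m * (n.choose m : ℝ) / (x - m)
          = ∑ m ∈ range (n + 1), (-1 : ℝ) ^ m * (n.choose m : ℝ) / (x - m) := by
        rw [Finset.sum_range_succ]
        simp
      linarith [haux, h2]
    rw [step, ih x hx0, ih (x - 1) hx1]
    have hprod : ∏ m ∈ range (n + 1), ((x - 1) - m) = ∏ m ∈ range (n + 1), (x - (m + 1 : ℕ)) := by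
      apply Finset.prod_congr rfl
      intro m _; push_cast; ring
    rw [hprod]
    have h1 : ∏ m ∈ range (n + 2), (x - m) = (∏ m ∈ range (n + 1), (x - m)) * (x - (n + 1 : ℕ)) :=
      Finset.prod_range_succ _ _
    have h2 : ∏ m ∈ range (n + 2), (x - m) = (x - (0:ℕ)) * ∏ m ∈ range (n + 1), (x - (m + 1 : ℕ)) := by
      rw [Finset.prod_range_succ' (fun m => (x - m)) (n+1)]; ring
    have hA : ∏ m ∈ range (n + 1), (x - m) ≠ 0 :=
      Finset.prod_ne_zero_iff.mpr (fun m hm => hx0 m (by simpa using Nat.lt_succ_iff.mp (mem_range.mp hm)))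
    have hB : ∏ m ∈ range (n + 1), (x - (m + 1 : ℕ)) ≠ 0 := by
      rw [← hprod]
      exact Finset.prod_ne_zero_iff.mpr (fun m hm => hx1 m (by simpa using Nat.lt_succ_iff.mp (mem_range.mp hm)))
    have hC : ∏ m ∈ range (n + 2), (x - m) ≠ 0 := by rw [h1]; exact mul_ne_zero hA (hx (n+1) le_rfl)
    rw [div_sub_div _ _ hA hB]
    rw [div_eq_div_iff (mul_ne_zero hA hB) hC]
    have hQx : (∏ m ∈ range (n + 1), (x - ((m + 1 : ℕ) : ℝ))) * (x - ((0 : ℕ) : ℝ))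
        = (∏ m ∈ range (n + 1), (x - (m : ℝ))) * (x - ((n + 1 : ℕ) : ℝ)) := by
      rw [mul_comm]; exact h2.symm.trans h1
    rw [h2]
    push_cast [Nat.factorial_succ] at hQx ⊢
    linear_combination ((-1 : ℝ) ^ n * (n.factorial : ℝ)
      * (∏ m ∈ range (n + 1), (x - ((m : ℝ) + 1)))) * hQx

private lemma aux_prod_sub (a : ℕ) : ∀ n : ℕ, n ≤ a →
    ∏ m ∈ range n, ((a : ℝ) - m) = (a.factorial : ℝ) / ((a - n).factorial : ℝ) := by
  intro n
  induction n with
  | zero =>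
    intro _
    have : ((a - 0).factorial : ℝ) ≠ 0 := by positivity
    field_simp
    simp
  | succ n ih =>
    intro h
    rw [Finset.prod_range_succ, ih (by omega)]
    have h1 : a - n = (a - (n + 1)) + 1 := by omega
    have h2 : ((a : ℝ) - n) = ((a - (n + 1) : ℕ) : ℝ) + 1 := by
      push_cast [Nat.cast_sub (by omega : n + 1 ≤ a)]
      ring
    have h3 : (((a - n).factorial : ℝ)) = (((a - (n + 1) : ℕ) : ℝ) + 1) * (((a - (n + 1)).factorial : ℝ)) := by
      rw [h1, Nat.factorial_succ]; push_cast; ring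
    have hf : (((a - (n + 1)) : ℕ).factorial : ℝ) ≠ 0 := by positivity
    have hf2 : (((a - (n + 1) : ℕ) : ℝ) + 1) ≠ 0 := by positivity
    have ha : (a.factorial : ℝ) ≠ 0 := by positivity
    rw [h2, h3, div_mul_eq_mul_div, div_eq_div_iff (mul_ne_zero hf2 hf) hf]
    ring

/-- For all integers `k ≥ 2`, `i ≥ 1`, `j ≥ 0` with `i + j < k`,
`Σ_{g=j+1}^{i+j} (−1)^{g+1} (1/(k−g+1)) i C(i−1, g−j−1) C(k−i, j)
  = (−1)^{i+j+1} i! (k−i)! / ((k−j)! j!)`;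
equivalently, the left-hand side equals `C(k,i)⁻¹ (−1)^{1+i} C(k,j) (−1)^j`. -/
theorem stmt10 (k i j : ℕ) (hk : 2 ≤ k) (hi : 1 ≤ i) (hij : i + j < k) :
    (∑ g ∈ Finset.Icc (j + 1) (i + j),
        (-1 : ℝ) ^ (g + 1) * (1 / ((k : ℝ) - g + 1)) * (i : ℝ)
          * ((i - 1).choose (g - j - 1) : ℝ) * ((k - i).choose j : ℝ)
      = (-1 : ℝ) ^ (i + j + 1) * (i.factorial : ℝ) * ((k - i).factorial : ℝ)
          / (((k - j).factorial : ℝ) * (j.factorial : ℝ)))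
    ∧ (-1 : ℝ) ^ (i + j + 1) * (i.factorial : ℝ) * ((k - i).factorial : ℝ)
          / (((k - j).factorial : ℝ) * (j.factorial : ℝ))
      = ((k.choose i : ℝ))⁻¹ * (-1 : ℝ) ^ (1 + i) * (k.choose j : ℝ) * (-1 : ℝ) ^ j := by
  obtain ⟨i, rfl⟩ : ∃ i', i = i' + 1 := ⟨i - 1, by omega⟩
  constructor
  · -- first part
    have hIcc : Finset.Icc (j + 1) (i + 1 + j) = Finset.Ico (j + 1) (i + 1 + j + 1) := by
      rw [Nat.Icc_eq_range', Nat.Ico_eq_range']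
    rw [hIcc, Finset.sum_Ico_eq_sum_range]
    have hrange : i + 1 + j + 1 - (j + 1) = i + 1 := by omega
    rw [hrange]
    have hterm : ∀ m ∈ range (i + 1),
        (-1 : ℝ) ^ (j + 1 + m + 1) * (1 / ((k : ℝ) - (j + 1 + m : ℕ) + 1)) * ((i + 1 : ℕ) : ℝ)
          * ((i + 1 - 1).choose (j + 1 + m - j - 1) : ℝ) * ((k - (i+1)).choose j : ℝ)
        = ((-1 : ℝ) ^ j * ((i + 1 : ℕ) : ℝ) * ((k - (i+1)).choose j : ℝ))
          * ((-1 : ℝ) ^ m * (i.choose m : ℝ) / (((k : ℝ) - j) - m)) := by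
      intro m _
      have e1 : j + 1 + m - j - 1 = m := by omega
      have e2 : i + 1 - 1 = i := by omega
      rw [e1, e2]
      have e3 : (k : ℝ) - ((j + 1 + m : ℕ) : ℝ) + 1 = ((k : ℝ) - j) - m := by push_cast; ring
      rw [e3]
      have e4 : (-1 : ℝ) ^ (j + 1 + m + 1) = (-1 : ℝ) ^ j * (-1 : ℝ) ^ m := by
        rw [show j + 1 + m + 1 = (j + m) + 2 by ring, pow_add, pow_add]; ring
      rw [e4]
      ring
    rw [Finset.sum_congr rfl hterm, ← Finset.mul_sum]
    have hx : ∀ m ≤ i, ((k : ℝ) - j) - m ≠ 0 := by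
      intro m hm
      have h1 : (m : ℝ) + (j : ℝ) < (k : ℝ) := by exact_mod_cast (by omega : m + j < k)
      intro h; rw [sub_eq_zero] at h; nlinarith [h]
    rw [aux_sum_inv_sub i ((k : ℝ) - j) hx]
    have hcastkj : ((k : ℝ) - j) = ((k - j : ℕ) : ℝ) := by
      rw [Nat.cast_sub (by omega : j ≤ k)]
    have hconv : ∏ m ∈ range (i + 1), (((k : ℝ) - j) - m)
        = ∏ m ∈ range (i + 1), (((k - j : ℕ) : ℝ) - m) :=
      Finset.prod_congr rfl (fun m _ => by rw [hcastkj])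
    rw [hconv, aux_prod_sub (k - j) (i + 1) (by omega)]
    rw [Nat.cast_choose ℝ (by omega : j ≤ k - (i + 1))]
    have e5 : k - (i + 1) - j = k - j - (i + 1) := by omega
    rw [e5]
    have e6 : (-1 : ℝ) ^ (i + 1 + j + 1) = (-1 : ℝ) ^ j * (-1 : ℝ) ^ i := by
      rw [show i + 1 + j + 1 = (j + i) + 2 by ring, pow_add, pow_add]; ring
    rw [e6]
    have f1 : ((k - j).factorial : ℝ) ≠ 0 := by positivity
    have f2 : ((k - j - (i + 1)).factorial : ℝ) ≠ 0 := by positivity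
    have f3 : (j.factorial : ℝ) ≠ 0 := by positivity
    have f4 : ((k - (i + 1)).factorial : ℝ) ≠ 0 := by positivity
    push_cast [Nat.factorial_succ]
    field_simp
  · -- second part
    rw [Nat.cast_choose ℝ (by omega : i + 1 ≤ k), Nat.cast_choose ℝ (by omega : j ≤ k)]
    have h1 : (k.factorial : ℝ) ≠ 0 := by positivity
    have h2 : (((i+1).factorial : ℝ)) ≠ 0 := by positivity
    have h3 : (((k - (i+1)).factorial : ℝ)) ≠ 0 := by positivity
    have h4 : ((j.factorial : ℝ)) ≠ 0 := by positivity
    have h5 : (((k - j).factorial : ℝ)) ≠ 0 := by positivity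
    have hsign : (-1 : ℝ) ^ (i + 1 + j + 1) = (-1 : ℝ) ^ (1 + (i+1)) * (-1 : ℝ) ^ j := by
      rw [show i + 1 + j + 1 = (1 + (i + 1)) + j by ring, pow_add]
    rw [hsign]
    field_simp
end

section
/- For all integers k and h with 2 ≤ h, the following summation identity holds: Σ_{g=k−h+1}^{k−1} (−1)^{g+1} · C(h − 1, g − k + h − 1) · (g − k + h − 1)/(k − g + 1) = (h − 2)(−1)^k, where C(·,·) denotes the binomial coefficient. -/
private lemma alt_partial (N : ℕ) : ∀ t : ℕ, t ≤ N →
    ∑ j ∈ Finset.range (t + 1), (-1 : ℝ) ^ j * ((N + 1).choose j : ℝ)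
      = (-1) ^ t * (N.choose t : ℝ) := by
  intro t
  induction t with
  | zero => simp
  | succ t ih =>
    intro ht
    rw [Finset.sum_range_succ, ih (by omega)]
    rw [show (N + 1).choose (t + 1) = N.choose t + N.choose (t + 1) from
      Nat.choose_succ_succ N t]
    push_cast
    ring

private lemma key_sum (m : ℕ) (hm : 1 ≤ m) :
    ∑ j ∈ Finset.range m, (-1 : ℝ) ^ j * (m.choose j : ℝ) * ((j : ℝ) / ((m : ℝ) + 1 - j)) =
      (-1) ^ (m + 1) * ((m : ℝ) - 1) := by
  obtain ⟨p, rfl⟩ : ∃ p, m = p + 1 := ⟨m - 1, by omega⟩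
  have hsplit : ∀ j ∈ Finset.range (p + 1),
      (-1 : ℝ) ^ j * (((p + 1).choose j : ℕ) : ℝ) * ((j : ℝ) / (((p : ℝ) + 1) + 1 - j)) =
        -((-1 : ℝ) ^ j * ((p + 1).choose j : ℝ)) + (-1 : ℝ) ^ j * ((p + 2).choose j : ℝ) := by
    intro j hj
    rw [Finset.mem_range] at hj
    have hjle : (j : ℝ) < (p : ℝ) + 1 := by exact_mod_cast hj
    have hd : ((p : ℝ) + 1) + 1 - j ≠ 0 := by linarith
    have hc : ((p + 1).choose j : ℝ) * ((p : ℝ) + 2) =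
        ((p + 2).choose j : ℝ) * (((p : ℝ) + 1) + 1 - j) := by
      have h1 := Nat.choose_mul_succ_eq (p + 1) j
      have h2 : ((p + 1 + 1 - j : ℕ) : ℝ) = ((p : ℝ) + 1) + 1 - j := by
        have hle : j ≤ p + 1 + 1 := by omega
        push_cast [Nat.cast_sub hle]
        ring
      have h3 := congrArg (fun n : ℕ => (n : ℝ)) h1
      simp only [Nat.cast_mul] at h3
      rw [h2] at h3
      push_cast at h3 ⊢
      linarith [h3]
    have hcj : ((p + 1).choose j : ℝ) * j =
        (((p + 2).choose j : ℝ) - ((p + 1).choose j : ℝ)) * (((p : ℝ) + 1) + 1 - j) := by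
      nlinarith [hc]
    calc (-1 : ℝ) ^ j * ((p + 1).choose j : ℝ) * ((j : ℝ) / (((p : ℝ) + 1) + 1 - j))
        = (-1 : ℝ) ^ j * ((((p + 1).choose j : ℝ) * j) / (((p : ℝ) + 1) + 1 - j)) := by ring
      _ = (-1 : ℝ) ^ j * (((((p + 2).choose j : ℝ) - ((p + 1).choose j : ℝ))
            * (((p : ℝ) + 1) + 1 - j)) / (((p : ℝ) + 1) + 1 - j)) := by rw [hcj]
      _ = (-1 : ℝ) ^ j * (((p + 2).choose j : ℝ) - ((p + 1).choose j : ℝ)) := by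
            rw [mul_div_cancel_right₀ _ hd]
      _ = -((-1 : ℝ) ^ j * ((p + 1).choose j : ℝ)) + (-1 : ℝ) ^ j * ((p + 2).choose j : ℝ) := by
            ring
  have hA : ∑ j ∈ Finset.range (p + 1), (-1 : ℝ) ^ j * ((p + 1).choose j : ℝ)
      = (-1 : ℝ) ^ p * (p.choose p : ℝ) := alt_partial p p le_rfl
  have hB : ∑ j ∈ Finset.range (p + 1), (-1 : ℝ) ^ j * ((p + 2).choose j : ℝ)
      = (-1 : ℝ) ^ p * ((p + 1).choose p : ℝ) := alt_partial (p + 1) p (by omega)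
  push_cast at *
  rw [Finset.sum_congr rfl hsplit, Finset.sum_add_distrib, Finset.sum_neg_distrib, hA, hB]
  rw [Nat.choose_self, Nat.choose_succ_self_right]
  push_cast
  ring

/-- For all integers `k` and `h` with `2 ≤ h`,
`Σ_{g=k−h+1}^{k−1} (−1)^{g+1} C(h−1, g−k+h−1) (g−k+h−1)/(k−g+1) = (h−2)(−1)^k`
(Lemma 5 in the SI Text). -/
theorem stmt13 (k h : ℤ) (hh : 2 ≤ h) :
    ∑ g ∈ Finset.Icc (k - h + 1) (k - 1),
        (-1 : ℝ) ^ (g + 1) * ((h - 1).toNat.choose (g - k + h - 1).toNat : ℝ)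
          * (((g : ℝ) - (k : ℝ) + (h : ℝ) - 1) / ((k : ℝ) - (g : ℝ) + 1))
      = ((h : ℝ) - 2) * (-1 : ℝ) ^ k := by
  set m : ℕ := (h - 1).toNat with hm
  have hmz : (m : ℤ) = h - 1 := Int.toNat_of_nonneg (by omega)
  have hm1 : 1 ≤ m := by omega
  have hmap : Finset.Icc (k - h + 1) (k - 1) =
      Finset.map ⟨fun j : ℕ => k - h + 1 + j, fun a b hab => by simp only at hab; omega⟩ (Finset.range m) := by
    ext g
    simp only [Finset.mem_map, Finset.mem_Icc, Finset.mem_range, Function.Embedding.coeFn_mk]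
    dsimp only [DFunLike.coe, Function.instFunLikeEmbedding]
    constructor
    · rintro ⟨h1, h2⟩
      exact ⟨(g - (k - h + 1)).toNat, by omega, by omega⟩
    · rintro ⟨j, hj, rfl⟩
      omega
  have hneg : (-1 : ℝ) ≠ 0 := by norm_num
  have hsq : (-1 : ℝ) ^ (2 : ℤ) = 1 := by norm_num
  have hterm : ∀ j ∈ Finset.range m,
      (-1 : ℝ) ^ (k - h + 1 + (j : ℤ) + 1)
          * ((h - 1).toNat.choose (k - h + 1 + (j : ℤ) - k + h - 1).toNat : ℝ)
          * ((((k - h + 1 + (j : ℤ) : ℤ) : ℝ) - (k : ℝ) + (h : ℝ) - 1)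
            / ((k : ℝ) - ((k - h + 1 + (j : ℤ) : ℤ) : ℝ) + 1)) =
        (-1 : ℝ) ^ (k + h)
          * ((-1 : ℝ) ^ j * (m.choose j : ℝ) * ((j : ℝ) / ((m : ℝ) + 1 - j))) := by
    intro j hj
    rw [Finset.mem_range] at hj
    have h1 : (k - h + 1 + (j : ℤ) - k + h - 1).toNat = j := by omega
    have h2 : (-1 : ℝ) ^ (k - h + 1 + (j : ℤ) + 1) = (-1 : ℝ) ^ (k + h) * (-1 : ℝ) ^ j := by
      rw [show k - h + 1 + (j : ℤ) + 1 = (k + h) + (j : ℤ) + 2 * (1 - h) by ring,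
        zpow_add₀ hneg, zpow_add₀ hneg, zpow_mul, hsq, one_zpow, mul_one, zpow_natCast]
    rw [h1, h2]
    have h3 : ((k - h + 1 + (j : ℤ) : ℤ) : ℝ) = (k : ℝ) - h + 1 + j := by push_cast; ring
    have h4 : ((m : ℕ) : ℝ) = (h : ℝ) - 1 := by
      have := congrArg (fun z : ℤ => (z : ℝ)) hmz
      push_cast at this
      linarith [this]
    rw [h3, h4, ← hm]
    ring
  calc ∑ g ∈ Finset.Icc (k - h + 1) (k - 1),
        (-1 : ℝ) ^ (g + 1) * ((h - 1).toNat.choose (g - k + h - 1).toNat : ℝ)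
          * (((g : ℝ) - (k : ℝ) + (h : ℝ) - 1) / ((k : ℝ) - (g : ℝ) + 1))
      = ∑ j ∈ Finset.range m, (-1 : ℝ) ^ (k + h)
          * ((-1 : ℝ) ^ j * (m.choose j : ℝ) * ((j : ℝ) / ((m : ℝ) + 1 - j))) := by
        rw [hmap, Finset.sum_map]
        exact Finset.sum_congr rfl hterm
    _ = (-1 : ℝ) ^ (k + h) * ((-1 : ℝ) ^ (m + 1) * ((m : ℝ) - 1)) := by
        rw [← Finset.mul_sum, key_sum m hm1]
    _ = ((h : ℝ) - 2) * (-1 : ℝ) ^ k := by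
        have h4 : ((m : ℕ) : ℝ) = (h : ℝ) - 1 := by
          have := congrArg (fun z : ℤ => (z : ℝ)) hmz
          push_cast at this
          linarith [this]
        have h5 : (-1 : ℝ) ^ (m + 1) = (-1 : ℝ) ^ (h : ℤ) := by
          rw [← zpow_natCast]
          congr 1
          omega
        have h6 : (-1 : ℝ) ^ (k + h) * (-1 : ℝ) ^ (h : ℤ) = (-1 : ℝ) ^ k := by
          rw [← zpow_add₀ hneg, show k + h + h = k + 2 * h by ring, zpow_add₀ hneg, zpow_mul,
            hsq, one_zpow, mul_one]
        rw [h4, h5]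
        linear_combination ((h : ℝ) - 2) * h6
end

section
/- For all integers k and h with 2 ≤ h ≤ k, the combined coefficient vanishes: Σ_{g=k−h+1}^{k−1} (−1)^{g+1} · C(h − 1, g − k + h − 1) · ((k − h + 1) + (g − k + h − 1)/(k − g + 1)) + (−1)^{k−1}(k − 1) = 0. -/
lemma altA (n : ℕ) : ∀ m : ℕ, ∑ j ∈ Finset.range (m+1), (-1:ℝ)^j * ((n+1).choose j) = (-1)^m * (n.choose m) := by
  intro m
  induction m with
  | zero => simp
  | succ m ih =>
    rw [Finset.sum_range_succ, ih, Nat.choose_succ_succ]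
    push_cast
    ring

lemma keyB (n : ℕ) (hn : 1 ≤ n) (a : ℝ) :
    ∑ j ∈ Finset.range n, (-1:ℝ)^j * (n.choose j) * (a + j/((n:ℝ)+1-j)) =
      (-1)^(n-1) * (a + n - 1) := by
  have hstep : ∀ j ∈ Finset.range n,
      (-1:ℝ)^j * (n.choose j) * (a + j/((n:ℝ)+1-j)) =
      (-1:ℝ)^j * (n.choose j) * a + ((-1:ℝ)^j * ((n+1).choose j) - (-1:ℝ)^j * (n.choose j)) := by
    intro j hj
    rw [Finset.mem_range] at hj
    have hd : ((n:ℝ)+1-j) ≠ 0 := by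
      have : (j:ℝ) < n := by exact_mod_cast hj
      linarith
    have hkey : (n.choose j : ℝ) * ((n:ℝ)+1) = ((n+1).choose j : ℝ) * ((n:ℝ)+1-j) := by
      have h1 := Nat.choose_mul_succ_eq n j
      have h2 : ((n:ℝ)+1-j) = ((n+1-j : ℕ) : ℝ) := by
        push_cast [Nat.cast_sub (by omega : j ≤ n + 1)]
        ring
      rw [h2]
      exact_mod_cast h1
    field_simp
    linear_combination hkey
  rw [Finset.sum_congr rfl hstep]
  obtain ⟨m, rfl⟩ : ∃ m, n = m + 1 := ⟨n - 1, by omega⟩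
  rw [Finset.sum_add_distrib, Finset.sum_sub_distrib, ← Finset.sum_mul]
  rw [altA m m, altA (m+1) m]
  simp [Nat.choose_self, Nat.choose_succ_self_right]
  ring

/-- For all integers `k` and `h` with `2 ≤ h ≤ k`, the combined coefficient vanishes:
`Σ_{g=k−h+1}^{k−1} (−1)^{g+1} C(h−1, g−k+h−1) ((k−h+1) + (g−k+h−1)/(k−g+1))
  + (−1)^{k−1}(k−1) = 0` (the identity `S2` in the proof of Theorem 3). -/
theorem stmt14 (k h : ℤ) (hh : 2 ≤ h) (hhk : h ≤ k) :
    ∑ g ∈ Finset.Icc (k - h + 1) (k - 1),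
        (-1 : ℝ) ^ (g + 1) * ((h - 1).toNat.choose (g - k + h - 1).toNat : ℝ)
          * (((k : ℝ) - (h : ℝ) + 1)
              + ((g : ℝ) - (k : ℝ) + (h : ℝ) - 1) / ((k : ℝ) - (g : ℝ) + 1))
      + (-1 : ℝ) ^ (k - 1) * ((k : ℝ) - 1)
      = 0 := by
  set n : ℕ := (h-1).toNat with hn
  have hn1 : 1 ≤ n := by omega
  have hncast : (n:ℤ) = h - 1 := Int.toNat_of_nonneg (by omega)
  have hnR : (n:ℝ) = (h:ℝ) - 1 := by exact_mod_cast hncast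
  have hne : (-1:ℝ) ≠ 0 := by norm_num
  have hmain : ∑ g ∈ Finset.Icc (k - h + 1) (k - 1),
        (-1 : ℝ) ^ (g + 1) * ((h - 1).toNat.choose (g - k + h - 1).toNat : ℝ)
          * (((k : ℝ) - (h : ℝ) + 1)
              + ((g : ℝ) - (k : ℝ) + (h : ℝ) - 1) / ((k : ℝ) - (g : ℝ) + 1)) =
      ∑ j ∈ Finset.range n, (-1:ℝ)^(k-h) *
        ((-1:ℝ)^j * (n.choose j) * ((((k:ℝ) - h + 1)) + (j:ℝ)/((n:ℝ)+1-(j:ℝ)))) := by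
    apply Finset.sum_bij' (fun g _ => (g - (k-h+1)).toNat) (fun j _ => k-h+1+(j:ℤ))
    · intro g hg
      simp only [Finset.mem_Icc] at hg
      simp only [Finset.mem_range]
      omega
    · intro j hj
      simp only [Finset.mem_range] at hj
      simp only [Finset.mem_Icc]
      omega
    · intro g hg
      simp only [Finset.mem_Icc] at hg
      omega
    · intro j hj
      omega
    · intro g hg
      simp only [Finset.mem_Icc] at hg
      have hjz : (((g - (k-h+1)).toNat : ℕ) : ℤ) = g - (k-h+1) := Int.toNat_of_nonneg (by omega)
      have h1 : (g-k+h-1).toNat = (g - (k-h+1)).toNat := by omega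
      have hgR : (g:ℝ) = (k:ℝ) - h + 1 + ((g - (k-h+1)).toNat : ℝ) := by
        have h2 : (((g - (k-h+1)).toNat : ℕ) : ℝ) = (g:ℝ) - ((k:ℝ) - h + 1) := by
          exact_mod_cast congrArg (fun z : ℤ => (z:ℝ)) hjz
        rw [h2]; ring
      have hsign : (-1:ℝ)^(g+1) = (-1:ℝ)^(k-h) * (-1:ℝ)^((g - (k-h+1)).toNat) := by
        have hz2 : g + 1 = (k-h) + ((((g - (k-h+1)).toNat : ℕ) : ℤ) + 2) := by omega
        rw [hz2, zpow_add₀ hne, zpow_add₀ hne, zpow_natCast]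
        norm_num
      rw [h1, hsign, hgR, hnR]
      ring
  rw [hmain, ← Finset.mul_sum, keyB n hn1]
  have hp : (-1:ℝ)^(n-1) = (-1:ℝ)^((h:ℤ)-2) := by
    rw [← zpow_natCast]
    congr 1
    omega
  have hcomb : (-1:ℝ)^(k-h) * (-1:ℝ)^((h:ℤ)-2) = (-1:ℝ)^(k-2) := by
    rw [← zpow_add₀ hne]
    congr 1
    ring
  have hk1 : (-1:ℝ)^(k-1) = -(-1:ℝ)^(k-2) := by
    have hz3 : k - 1 = (k-2) + 1 := by ring
    rw [hz3, zpow_add₀ hne]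
    norm_num
  rw [hp, hnR, hk1, ← mul_assoc, hcomb]
  ring
end
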